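/- arXiv:1711.08802 — 11 statements merged into one kernel-verified Lean document; each statement's English description precedes it below -/
import Mathlib

section
/- Let A be a unital C*-algebra and let (x₁, x₂) ∈ A² satisfy x₁*x₁ - x₂*x₂ = 1 with x₁ invertible. Then ‖x₂x₁⁻¹‖ < 1, i.e., x₂x₁⁻¹ lies in the open unit ball of A. -/
/-- If `x₁* x₁ - x₂* x₂ = 1` with `x₁` invertible, then `‖x₂ x₁⁻¹‖ < 1`. -/
theorem norm_lt_one_of_sphere {A : Type*} [CStarAlgebra A]
    (x₁ x₂ : A) (hx₁ : IsUnit x₁) (h : star x₁ * x₁ - star x₂ * x₂ = 1) :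
    ‖x₂ * Ring.inverse x₁‖ < 1 := by
  obtain hA | hA := subsingleton_or_nontrivial A
  · simp [Subsingleton.elim (x₂ * Ring.inverse x₁) 0]
  let _ := CStarAlgebra.spectralOrder A
  have _ := CStarAlgebra.spectralOrderedRing A
  obtain ⟨v, hv⟩ := hx₁
  have hRing : Ring.inverse x₁ = (↑v⁻¹ : A) := by
    rw [← hv, Ring.inverse_unit]
  rw [hRing]
  have hu1 : x₁ * (↑v⁻¹ : A) = 1 := by rw [← hv]; exact_mod_cast v.mul_inv
  have hu2 : (↑v⁻¹ : A) * x₁ = 1 := by rw [← hv]; exact_mod_cast v.inv_mul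
  have key : star (x₂ * (↑v⁻¹ : A)) * (x₂ * (↑v⁻¹ : A))
      = 1 - star (↑v⁻¹ : A) * (↑v⁻¹ : A) := by
    have hx2 : star x₂ * x₂ = star x₁ * x₁ - 1 := by
      rw [eq_sub_iff_add_eq, ← eq_sub_iff_add_eq']; exact h.symm
    have hsu : star (↑v⁻¹ : A) * star x₁ = 1 := by rw [← star_mul, hu1, star_one]
    calc star (x₂ * (↑v⁻¹ : A)) * (x₂ * (↑v⁻¹ : A))
        = star (↑v⁻¹ : A) * (star x₂ * x₂) * (↑v⁻¹ : A) := by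
          rw [star_mul]; noncomm_ring
      _ = star (↑v⁻¹ : A) * (star x₁ * x₁ - 1) * (↑v⁻¹ : A) := by rw [hx2]
      _ = (star (↑v⁻¹ : A) * star x₁) * (x₁ * (↑v⁻¹ : A))
            - star (↑v⁻¹ : A) * (↑v⁻¹ : A) := by noncomm_ring
      _ = 1 - star (↑v⁻¹ : A) * (↑v⁻¹ : A) := by rw [hsu, hu1, one_mul]
  set a : A := star (↑v⁻¹ : A) * (↑v⁻¹ : A) with ha_def
  have ha_nonneg : (0 : A) ≤ a := star_mul_self_nonneg _
  have ha_unit : IsUnit a := (v⁻¹.isUnit.star).mul v⁻¹.isUnit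
  have ha_sa : IsSelfAdjoint a := IsSelfAdjoint.of_nonneg ha_nonneg
  have hspec : ∀ x ∈ spectrum ℝ a, 0 < x := by
    intro x hx
    have hnn := spectrum_nonneg_of_nonneg ha_nonneg hx
    have hx0 : x ≠ 0 := fun h0 => (spectrum.zero_notMem_iff ℝ).mpr ha_unit (h0 ▸ hx)
    exact hnn.lt_of_ne (Ne.symm hx0)
  obtain ⟨r, hr_pos, hr_le⟩ := (CFC.exists_pos_algebraMap_le_iff ha_sa).mpr hspec
  have halg : ∀ t : ℝ, 0 ≤ t → (0 : A) ≤ algebraMap ℝ A t := by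
    intro t ht
    have hstar : star (algebraMap ℝ A (Real.sqrt t)) = algebraMap ℝ A (Real.sqrt t) := by
      simp [Algebra.algebraMap_eq_smul_one, star_smul]
    have := star_mul_self_nonneg (algebraMap ℝ A (Real.sqrt t))
    rwa [hstar, ← map_mul, Real.mul_self_sqrt ht] at this
  set r' : ℝ := min r 1 with hr'_def
  have hr'_pos : 0 < r' := lt_min hr_pos one_pos
  have hr'_le_one : r' ≤ 1 := min_le_right r 1
  have hr'_le : algebraMap ℝ A r' ≤ a := by
    refine le_trans ?_ hr_le
    rw [← sub_nonneg, ← map_sub]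
    exact halg _ (by simp [hr'_def])
  have hya_nonneg : (0 : A) ≤ 1 - a := key ▸ star_mul_self_nonneg _
  have hle : (1 : A) - a ≤ algebraMap ℝ A (1 - r') := by
    rw [map_sub, map_one]
    exact sub_le_sub_left hr'_le 1
  have hnorm : ‖(1 : A) - a‖ ≤ 1 - r' :=
    (CStarAlgebra.norm_le_iff_le_algebraMap _ (by linarith) hya_nonneg).mpr hle
  have hsq : ‖x₂ * (↑v⁻¹ : A)‖ * ‖x₂ * (↑v⁻¹ : A)‖ = ‖(1 : A) - a‖ := by
    rw [← key, CStarRing.norm_star_mul_self]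
  nlinarith [norm_nonneg (x₂ * (↑v⁻¹ : A))]
end

section
/- Let A be a unital C*-algebra and x₁, x₂ ∈ A with x₁ invertible and x₁*x₁ - x₂*x₂ = 1. Then x₁ + x₂ is invertible in A. -/
/-- If `x₁* x₁ - x₂* x₂ = 1` with `x₁` invertible, then `x₁ + x₂` is invertible. -/
theorem isUnit_add_of_sphere {A : Type*} [CStarAlgebra A]
    (x₁ x₂ : A) (hx₁ : IsUnit x₁) (h : star x₁ * x₁ - star x₂ * x₂ = 1) :
    IsUnit (x₁ + x₂) := by
  nontriviality A
  let _ := CStarAlgebra.spectralOrder A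
  have _ := CStarAlgebra.spectralOrderedRing A
  obtain ⟨v, rfl⟩ := hx₁
  set u : A := (↑v⁻¹ : A) with hu
  set b : A := x₂ * u with hb
  have huv : (v : A) * u = 1 := by simp [hu]
  have hvu : u * (v : A) = 1 := by simp [hu]
  have hs : star x₂ * x₂ = star (v : A) * v - 1 := by rw [← h]; abel
  have h1 : star u * star (v : A) = 1 := by rw [← star_mul, huv, star_one]
  have key : star b * b = 1 - star u * u := by
    calc star b * b = star u * (star x₂ * x₂) * u := by
          simp only [hb, star_mul, mul_assoc]
      _ = (star u * star (v : A)) * ((v : A) * u) - star u * u := by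
          rw [hs]; noncomm_ring
      _ = 1 - star u * u := by rw [h1, huv, one_mul]
  have hbb_nonneg : (0 : A) ≤ star b * b := star_mul_self_nonneg b
  have hle1 : star b * b ≤ 1 := by
    rw [key]; exact sub_le_self 1 (star_mul_self_nonneg u)
  have hunit : IsUnit ((1 : A) - star b * b) := by
    rw [key, sub_sub_cancel]
    exact (v⁻¹.isUnit.star).mul v⁻¹.isUnit
  have hnorm_le : ‖star b * b‖ ≤ 1 :=
    (CStarAlgebra.norm_le_one_iff_of_nonneg _ hbb_nonneg).mpr hle1
  have hnorm_lt : ‖star b * b‖ < 1 := by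
    rcases lt_or_eq_of_le hnorm_le with hlt | heq
    · exact hlt
    · exfalso
      have hmem : ‖star b * b‖ ∈ spectrum ℝ (star b * b) :=
        CStarAlgebra.norm_mem_spectrum_of_nonneg hbb_nonneg
      rw [heq, spectrum.mem_iff] at hmem
      exact hmem (by simpa using hunit)
  have hb_lt : ‖b‖ < 1 := by
    by_contra hcon
    push_neg at hcon
    have : (1 : ℝ) ≤ ‖star b * b‖ := by
      rw [CStarRing.norm_star_mul_self]
      nlinarith [norm_nonneg b]
    linarith
  have h1b : IsUnit (1 + b) := by
    have := isUnit_one_sub_of_norm_lt_one (x := -b) (by simpa using hb_lt)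
    simpa using this
  have hfac : (1 + b) * v = (v : A) + x₂ := by
    rw [hb, add_mul, one_mul, mul_assoc, hvu, mul_one]
  rw [← hfac]
  exact h1b.mul v.isUnit
end

section
/- Let A be a unital C*-algebra and let z₁, z₂ ∈ A be invertible with Im(z₂z₁⁻¹) positive and invertible. Then z₁ - i z₂ is invertible. -/
section Aux
variable {A : Type*} [CStarAlgebra A] [PartialOrder A] [StarOrderedRing A]

/-- If `c` is selfadjoint, then `1 - i c` is invertible. -/
lemma aux_isUnit_one_sub_I_smul (c : A) (hc : IsSelfAdjoint c) :
    IsUnit (1 - Complex.I • c) := by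
  have hmul : (1 - Complex.I • c) * (1 + Complex.I • c) = 1 + c * c := by
    rw [sub_mul, one_mul, mul_add, mul_one, smul_mul_smul_comm]
    rw [Complex.I_mul_I, neg_one_smul]
    abel
  have hcomm : Commute (1 - Complex.I • c) (1 + Complex.I • c) :=
    (Commute.one_right _).add_right ((Commute.one_left _).sub_left (Commute.refl _))
  have hunit : IsUnit ((1 : A) + c * c) := by
    refine CStarAlgebra.isUnit_of_le 1 ?_ isStrictlyPositive_one
    have : (0 : A) ≤ c * c := by
      simpa [hc.star_eq] using star_mul_self_nonneg c
    exact le_add_of_nonneg_right this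
  rw [← hmul] at hunit
  exact (hcomm.isUnit_mul_iff.mp hunit).1

/-- If `a` is positive invertible and `b` is selfadjoint, `a - i b` is invertible. -/
lemma aux_isUnit_sub_I_smul (a b : A) (ha : IsUnit a) (ha0 : 0 ≤ a)
    (hb : IsSelfAdjoint b) : IsUnit (a - Complex.I • b) := by
  set s := CFC.sqrt a with hs
  have hs0 : 0 ≤ s := CFC.sqrt_nonneg (a := a)
  have hss : s * s = a := CFC.sqrt_mul_sqrt_self a ha0
  have hsu : IsUnit s := by
    have := ha
    rw [← hss] at this
    exact ((Commute.refl s).isUnit_mul_iff.mp this).1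
  have hssa : IsSelfAdjoint s := .of_nonneg hs0
  set t := Ring.inverse s with ht
  have hts : t * s = 1 := Ring.inverse_mul_cancel s hsu
  have hst : s * t = 1 := Ring.mul_inverse_cancel s hsu
  have htsa : IsSelfAdjoint t := by
    rw [ht, IsSelfAdjoint, ← Ring.inverse_star, hssa.star_eq]
  have hc : IsSelfAdjoint (t * b * t) := by
    rw [IsSelfAdjoint, star_mul, star_mul, htsa.star_eq, hb.star_eq, mul_assoc]
  have hkey : s * (1 - Complex.I • (t * b * t)) * s = a - Complex.I • b := by
    rw [mul_sub, sub_mul, mul_one, hss, mul_smul_comm, smul_mul_assoc]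
    congr 2
    calc s * (t * b * t) * s = (s * t) * b * (t * s) := by noncomm_ring
      _ = b := by rw [hst, hts, one_mul, mul_one]
  rw [← hkey]
  exact (hsu.mul (aux_isUnit_one_sub_I_smul _ hc)).mul hsu

end Aux

/-- The imaginary part `(a - a*)/(2i)` of an element of a C*-algebra. -/
noncomputable def imPart {A : Type*} [CStarAlgebra A] (a : A) : A :=
  (2 * Complex.I)⁻¹ • (a - star a)

/-- If `z₁, z₂` are invertible and `Im(z₂ z₁⁻¹)` is positive invertible, then `z₁ - i z₂`
is invertible. -/
theorem isUnit_sub_smul_I_of_imPart_pos {A : Type*} [CStarAlgebra A] [PartialOrder A]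
    [StarOrderedRing A] (z₁ z₂ : A) (h₁ : IsUnit z₁) (h₂ : IsUnit z₂)
    (hpos : 0 ≤ imPart (z₂ * Ring.inverse z₁)) (hinv : IsUnit (imPart (z₂ * Ring.inverse z₁))) :
    IsUnit (z₁ - Complex.I • z₂) := by
  set w := z₂ * Ring.inverse z₁ with hw
  set m := imPart w with hm
  set b := (2 : ℂ)⁻¹ • (w + star w) with hb
  have hbsa : IsSelfAdjoint b := by
    rw [IsSelfAdjoint, hb, star_smul, star_add, star_star]
    simp [add_comm]
  have hdecomp : (1 : A) - Complex.I • w = (1 + m) - Complex.I • b := by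
    have h1 : ((2 : ℂ) * Complex.I)⁻¹ = -((2 : ℂ)⁻¹) * Complex.I := by
      rw [mul_inv, Complex.inv_I]; ring
    rw [hm, hb, imPart, smul_smul, h1, smul_sub, smul_add]
    match_scalars <;> simp <;> ring_nf <;> simp [Complex.I_sq] <;> ring
  have hmsa : IsSelfAdjoint m := .of_nonneg hpos
  have haunit : IsUnit ((1 : A) + m) :=
    CStarAlgebra.isUnit_of_le 1 (le_add_of_nonneg_right hpos) isStrictlyPositive_one
  have ha0 : (0 : A) ≤ 1 + m := le_trans zero_le_one (le_add_of_nonneg_right hpos)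
  have hwunit : IsUnit ((1 : A) - Complex.I • w) := by
    rw [hdecomp]
    exact aux_isUnit_sub_I_smul _ _ haunit ha0 hbsa
  have hfact : (1 - Complex.I • w) * z₁ = z₁ - Complex.I • z₂ := by
    rw [sub_mul, one_mul, smul_mul_assoc, hw, mul_assoc, Ring.inverse_mul_cancel z₁ h₁, mul_one]
  rw [← hfact]
  exact hwunit.mul h₁
end

section
/- Let A be a unital C*-algebra and let r = [[r₁₁, r₁₂],[r₁₂*, r₂₂]] be a positive invertible element of M₂(A) satisfying ρ_D r ρ_D = r⁻¹ where ρ_D = [[1,0],[0,-1]]. Then r₁₁² - r₁₂ r₁₂* = 1 and r₁₁ ≥ 1. -/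
set_option maxHeartbeats 1000000

/-- If `r = [[r₁₁,r₁₂],[r₁₂*,r₂₂]]` is positive invertible in `M₂(A)` with
`ρ_D r ρ_D = r⁻¹` (`ρ_D = [[1,0],[0,-1]]`), then `r₁₁² - r₁₂ r₁₂* = 1` and `r₁₁ ≥ 1`. -/
theorem corner_relations_of_positive_form_element {A : Type*} [CStarAlgebra A]
    [PartialOrder A] [StarOrderedRing A]
    (ρD : Matrix (Fin 2) (Fin 2) A) (hρD : ρD = !![1, 0; 0, -1])
    (r₁₁ r₁₂ r₂₂ : A) (r : Matrix (Fin 2) (Fin 2) A)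
    (hr : r = !![r₁₁, r₁₂; star r₁₂, r₂₂])
    (hpos : ∃ s : Matrix (Fin 2) (Fin 2) A, r = star s * s)
    (hru : IsUnit r)
    (hrel : ρD * r * ρD = Ring.inverse r) :
    r₁₁ * r₁₁ - r₁₂ * star r₁₂ = 1 ∧ 1 ≤ r₁₁ := by
  have h1 : (ρD * r * ρD) * r = 1 := by rw [hrel]; exact Ring.inverse_mul_cancel r hru
  have key := congrArg (fun M => M 0 0) h1
  simp [hρD, hr, Matrix.mul_apply, Fin.sum_univ_two] at key
  have key' : r₁₁ * r₁₁ - r₁₂ * star r₁₂ = 1 := by rw [sub_eq_add_neg]; exact key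
  refine ⟨key', ?_⟩
  -- r₁₁ is nonnegative since r is positive
  have hnn : 0 ≤ r₁₁ := by
    obtain ⟨s, hs⟩ := hpos
    have h00 := congrArg (fun M => M 0 0) hs
    simp [hr, Matrix.mul_apply, Fin.sum_univ_two, Matrix.star_apply] at h00
    rw [h00]
    exact add_nonneg (star_mul_self_nonneg _) (star_mul_self_nonneg _)
  have hsq : (1 : A) ≤ r₁₁ ^ 2 := by
    have h2 : 0 ≤ r₁₂ * star r₁₂ := mul_star_self_nonneg r₁₂
    have : (1 : A) ≤ r₁₁ * r₁₁ :=
      calc (1:A) = r₁₁ * r₁₁ - r₁₂ * star r₁₂ := key'.symm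
        _ ≤ r₁₁ * r₁₁ := by simp [h2]
    simpa [sq] using this
  have hsa : IsSelfAdjoint r₁₁ := .of_nonneg hnn
  rw [CFC.one_le_iff (R := ℝ) r₁₁]
  intro x hx
  have hx0 : 0 ≤ x := spectrum_nonneg_of_nonneg hnn hx
  have hx2 : (1:ℝ) ≤ x ^ 2 := by
    have hmem : x ^ 2 ∈ spectrum ℝ (r₁₁ ^ 2) := by
      have hmap := cfc_map_spectrum (fun t : ℝ => t ^ 2) r₁₁
      rw [cfc_pow_id (R := ℝ) r₁₁] at hmap
      rw [hmap]
      exact ⟨x, hx, rfl⟩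
    exact (CFC.one_le_iff (R := ℝ) (r₁₁ ^ 2) (hsa.pow 2)).mp hsq _ hmem
  nlinarith
end

section
/- Let A be a unital C*-algebra, ρ_D = [[1,0],[0,-1]], and let r = [[r₁₁, r₁₂],[r₁₂*, r₂₂]] be a positive element of M₂(A) with ρ_D r ρ_D = r⁻¹ and ‖r₁₂‖ < 1. If x₁ ∈ A is invertible and x₂ ∈ A with ‖x₂x₁⁻¹‖ < 1, then r₁₁x₁ + r₁₂x₂ is invertible. -/
set_option maxHeartbeats 1000000

lemma one_le_of_sq_aux {A : Type*} [CStarAlgebra A] [PartialOrder A] [StarOrderedRing A]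
    {a : A} (ha : 0 ≤ a) (h : (1 : A) ≤ a * a) : (1 : A) ≤ a := by
  have hsa : IsSelfAdjoint a := IsSelfAdjoint.of_nonneg ha
  rw [CFC.one_le_iff (R := ℝ) a]
  intro x hx
  have hx0 : 0 ≤ x := spectrum_nonneg_of_nonneg ha hx
  have hmap : a * a = cfc (fun y : ℝ => y * y) a := by
    rw [cfc_mul _ _ a, cfc_id' ℝ a]
  have hx2 : x * x ∈ spectrum ℝ (a * a) := by
    rw [hmap, cfc_map_spectrum (fun y : ℝ => y * y) a]
    exact ⟨x, hx, rfl⟩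
  have h2 : IsSelfAdjoint (a * a) := by rw [hmap]; exact cfc_predicate _ a
  have := (CFC.one_le_iff (R := ℝ) (a * a) h2).mp h _ hx2
  nlinarith

/-- If `r = [[r₁₁,r₁₂],[r₁₂*,r₂₂]]` is positive in `M₂(A)` with `ρ_D r ρ_D = r⁻¹` and
`‖r₁₂‖ < 1`, and `x₁` is invertible with `‖x₂ x₁⁻¹‖ < 1`, then `r₁₁ x₁ + r₁₂ x₂` is
invertible. -/
theorem isUnit_corner_combination {A : Type*} [CStarAlgebra A]
    (ρD : Matrix (Fin 2) (Fin 2) A) (hρD : ρD = !![1, 0; 0, -1])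
    (r₁₁ r₁₂ r₂₂ : A) (r : Matrix (Fin 2) (Fin 2) A)
    (hr : r = !![r₁₁, r₁₂; star r₁₂, r₂₂])
    (hpos : ∃ s : Matrix (Fin 2) (Fin 2) A, r = star s * s)
    (hru : IsUnit r)
    (hrel : ρD * r * ρD = Ring.inverse r)
    (hr₁₂ : ‖r₁₂‖ < 1)
    (x₁ x₂ : A) (hx₁ : IsUnit x₁) (hx : ‖x₂ * Ring.inverse x₁‖ < 1) :
    IsUnit (r₁₁ * x₁ + r₁₂ * x₂) := by
  letI : PartialOrder A := CStarAlgebra.spectralOrder A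
  haveI : StarOrderedRing A := CStarAlgebra.spectralOrderedRing A
  -- key algebraic identity from ρD r ρD = r⁻¹
  have hmul : r * (ρD * r * ρD) = 1 := by
    rw [hrel]; exact Ring.mul_inverse_cancel r hru
  have h00 := congrFun (congrFun hmul 0) 0
  simp [hr, hρD, Matrix.mul_apply, Fin.sum_univ_two, Matrix.one_apply] at h00
  -- h00 should say : r₁₁ * r₁₁ - r₁₂ * star r₁₂ = 1 (in some form)
  -- nonnegativity of r₁₁
  obtain ⟨s, hs⟩ := hpos
  have h11 : r₁₁ = star (s 0 0) * s 0 0 + star (s 1 0) * s 1 0 := by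
    have := congrFun (congrFun (hr ▸ hs) 0) 0
    simpa [Matrix.mul_apply, Fin.sum_univ_two, Matrix.star_apply] using this
  have hnn : (0 : A) ≤ r₁₁ := by
    rw [h11]
    exact add_nonneg (star_mul_self_nonneg _) (star_mul_self_nonneg _)
  have hone : (1 : A) ≤ r₁₁ := by
    refine one_le_of_sq_aux hnn ?_
    have : r₁₁ * r₁₁ = 1 + r₁₂ * star r₁₂ := by
      have := h00
      rw [← sub_eq_add_neg] at this
      exact eq_add_of_sub_eq this
    rw [this]
    exact le_add_of_nonneg_right (mul_star_self_nonneg _)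
  have hunit : IsUnit r₁₁ := CStarAlgebra.isUnit_of_le 1 hone isStrictlyPositive_one
  set u : Aˣ := hunit.unit with hu
  have huv : (u : A) = r₁₁ := hunit.unit_spec
  have hinv_nn : (0 : A) ≤ (↑u⁻¹ : A) :=
    CFC.inv_nonneg_of_nonneg u (by rw [huv]; exact hnn)
  have h1u : (1 : Aˣ) ≤ u := by
    rw [← Units.val_le_val]
    simpa [huv] using hone
  have hinv_le : (↑u⁻¹ : A) ≤ 1 := CStarAlgebra.inv_le_one h1u
  have hinv_norm : ‖(↑u⁻¹ : A)‖ ≤ 1 :=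
    (CStarAlgebra.norm_le_one_iff_of_nonneg _ hinv_nn).mpr hinv_le
  set z : A := x₂ * Ring.inverse x₁ with hz
  set t : A := (↑u⁻¹ : A) * r₁₂ * z with ht
  have hzn : ‖z‖ < 1 := hx
  have htn : ‖t‖ < 1 := by
    have hb : ‖(↑u⁻¹ : A) * r₁₂‖ ≤ ‖r₁₂‖ := by
      calc ‖(↑u⁻¹ : A) * r₁₂‖ ≤ ‖(↑u⁻¹ : A)‖ * ‖r₁₂‖ := norm_mul_le _ _
        _ ≤ 1 * ‖r₁₂‖ := by gcongr
        _ = ‖r₁₂‖ := one_mul _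
    calc ‖t‖ ≤ ‖(↑u⁻¹ : A) * r₁₂‖ * ‖z‖ := norm_mul_le _ _
      _ ≤ ‖r₁₂‖ * ‖z‖ := by gcongr
      _ < 1 := by nlinarith [norm_nonneg r₁₂, norm_nonneg z,
          mul_nonneg (norm_nonneg r₁₂) (norm_nonneg z)]
  have hu1 : IsUnit (1 + t) := by
    have := (Units.oneSub (-t) (by simpa using htn)).isUnit
    simpa [sub_neg_eq_add] using this
  have hzx : z * x₁ = x₂ := by
    rw [hz, mul_assoc, Ring.inverse_mul_cancel x₁ hx₁, mul_one]
  have hru' : r₁₁ * (↑u⁻¹ : A) = 1 := by rw [← huv]; exact u.mul_inv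
  have heq : r₁₁ * ((1 + t) * x₁) = r₁₁ * x₁ + r₁₂ * x₂ := by
    calc r₁₁ * ((1 + t) * x₁) = r₁₁ * x₁ + (r₁₁ * (↑u⁻¹ : A)) * (r₁₂ * (z * x₁)) := by
          rw [ht]; noncomm_ring
      _ = r₁₁ * x₁ + r₁₂ * x₂ := by rw [hru', hzx, one_mul]
  rw [← heq]
  exact hunit.mul (hu1.mul hx₁)
end

section
/- Let A be a unital C*-algebra, g ∈ A invertible, and x ∈ A with g*x selfadjoint. For h ∈ A with Im(h) positive invertible, define the Moebius action b·h = (x + (g*)⁻¹h) g⁻¹ of the lower-triangular matrix b = [[g,0],[x,(g*)⁻¹]]. Then Im(b·h) = (g*)⁻¹ Im(h) g⁻¹; in particular Im(b·h) is positive and invertible. -/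
/-- For the Moebius action `b·h = (x + (g*)⁻¹ h) g⁻¹` of the lower triangular matrix
`b = [[g,0],[x,(g*)⁻¹]]` (with `g` invertible and `g* x` selfadjoint) on the half-space,
one has `Im(b·h) = (g*)⁻¹ Im(h) g⁻¹`; in particular `Im(b·h)` is positive invertible. -/
theorem imPart_borel_action {A : Type*} [CStarAlgebra A] [PartialOrder A] [StarOrderedRing A]
    (g x h : A) (hg : IsUnit g) (hsa : IsSelfAdjoint (star g * x))
    (hpos : 0 ≤ imPart h) (hinv : IsUnit (imPart h)) :
    imPart ((x + Ring.inverse (star g) * h) * Ring.inverse g) =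
      Ring.inverse (star g) * imPart h * Ring.inverse g ∧
    0 ≤ imPart ((x + Ring.inverse (star g) * h) * Ring.inverse g) ∧
    IsUnit (imPart ((x + Ring.inverse (star g) * h) * Ring.inverse g)) := by
  set u := Ring.inverse g with hu
  have hvu : Ring.inverse (star g) = star u := Ring.inverse_star g
  have hgu : g * u = 1 := Ring.mul_inverse_cancel g hg
  have hug : u * g = 1 := Ring.inverse_mul_cancel g hg
  have hxg : star x * g = star g * x := by
    conv_rhs => rw [← hsa.star_eq]
    rw [star_mul, star_star]
  have hx : x * u = star u * star x := by
    have h2 : star u * star g = 1 := by rw [← star_mul, hgu, star_one]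
    calc x * u = (star u * star g) * (x * u) := by rw [h2, one_mul]
      _ = star u * (star g * x) * u := by noncomm_ring
      _ = star u * (star x * g) * u := by rw [hxg]
      _ = (star u * star x) * (g * u) := by noncomm_ring
      _ = star u * star x := by rw [hgu, mul_one]
  have key : imPart ((x + Ring.inverse (star g) * h) * u) =
      Ring.inverse (star g) * imPart h * u := by
    rw [hvu]
    simp only [imPart, star_mul, star_add, star_star]
    rw [mul_smul_comm, smul_mul_assoc]
    congr 1
    have expand : (x + star u * h) * u - star u * (star x + star h * u) =
        (x * u - star u * star x) + star u * (h - star h) * u := by noncomm_ring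
    rw [expand, hx, sub_self, zero_add]
  refine ⟨key, ?_, ?_⟩
  · rw [key, hvu]
    exact star_left_conjugate_nonneg hpos u
  · rw [key, hvu]
    exact ((isUnit_star.mpr (isUnit_ringInverse.mpr hg)).mul hinv).mul (isUnit_ringInverse.mpr hg)
end

section
/- Let A be a unital C*-algebra. For any two elements h, h' of the Poincaré half-space H = { h ∈ A : Im(h) positive invertible }, there exists an invertible g ∈ A and y ∈ A with g*y selfadjoint such that (y + (g*)⁻¹ h) g⁻¹ = h'. That is, the Borel group of matrices [[g,0],[y,(g*)⁻¹]] acts transitively on H. -/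
lemma imPart_isSelfAdjoint {A : Type*} [CStarAlgebra A] (a : A) :
    IsSelfAdjoint (imPart a) := by
  unfold imPart
  rw [IsSelfAdjoint, star_smul, star_sub, star_star, RCLike.star_def]
  rw [map_inv₀, map_mul, Complex.conj_I]
  simp only [Complex.conj_ofNat, mul_neg, inv_neg, neg_smul]
  rw [← smul_neg, neg_sub]

/-- If `b * b` is a unit then `b` is a unit. -/
lemma isUnit_of_sq {A : Type*} [Monoid A] {b : A} {u : Aˣ} (hb : b * b = u) : IsUnit b := by
  have h1 : b * (b * ↑u⁻¹) = 1 := by rw [← mul_assoc, hb, Units.mul_inv]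
  have h2 : (↑u⁻¹ * b) * b = 1 := by rw [mul_assoc, hb, Units.inv_mul]
  have heq : (↑u⁻¹ : A) * b = b * ↑u⁻¹ := by
    calc (↑u⁻¹ : A) * b = (↑u⁻¹ * b) * (b * (b * ↑u⁻¹)) := by rw [h1, mul_one]
      _ = ((↑u⁻¹ * b) * b) * (b * ↑u⁻¹) := by simp only [mul_assoc]
      _ = b * ↑u⁻¹ := by rw [h2, one_mul]
  exact ⟨⟨b, b * ↑u⁻¹, h1, by rw [← heq, h2]⟩, rfl⟩

/-- Square root of a positive invertible element, as a unit. -/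
noncomputable def sqrtUnit {A : Type*} [CStarAlgebra A] [PartialOrder A]
    [StarOrderedRing A] (a : A) (hpos : 0 ≤ a) (hinv : IsUnit a) : Aˣ :=
  (isUnit_of_sq (u := hinv.unit) (by rw [IsUnit.unit_spec]; exact CFC.sqrt_mul_sqrt_self a hpos)).unit

/-- The Borel group of matrices `[[g,0],[y,(g*)⁻¹]]` acts transitively on the Poincaré
half-space `H = { h : Im(h) positive invertible }` via `h ↦ (y + (g*)⁻¹ h) g⁻¹`. -/
theorem borel_action_transitive {A : Type*} [CStarAlgebra A] [PartialOrder A]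
    [StarOrderedRing A] (h h' : A)
    (hpos : 0 ≤ imPart h) (hinv : IsUnit (imPart h))
    (hpos' : 0 ≤ imPart h') (hinv' : IsUnit (imPart h')) :
    ∃ g y : A, IsUnit g ∧ IsSelfAdjoint (star g * y) ∧
      (y + Ring.inverse (star g) * h) * Ring.inverse g = h' := by
  set a := imPart h with ha_def
  set b := imPart h' with hb_def
  set ua : Aˣ := sqrtUnit a hpos hinv with hua_def
  set ub : Aˣ := sqrtUnit b hpos' hinv' with hub_def
  have hua : (ua : A) = CFC.sqrt a := rfl
  have hub : (ub : A) = CFC.sqrt b := rfl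
  have hsa_sa : IsSelfAdjoint (ua : A) := hua ▸ (CFC.sqrt_nonneg (a := a)).isSelfAdjoint
  have hsb_sa : IsSelfAdjoint (ub : A) := hub ▸ (CFC.sqrt_nonneg (a := b)).isSelfAdjoint
  have haa : (ua : A) * (ua : A) = a := hua ▸ CFC.sqrt_mul_sqrt_self a hpos
  have hbb : (ub : A) * (ub : A) = b := hub ▸ CFC.sqrt_mul_sqrt_self b hpos'
  set u : Aˣ := ub⁻¹ * ua with hu_def
  have hstar_ua : star ua = ua := Units.ext hsa_sa
  have hstar_ub : star ub = ub := Units.ext hsb_sa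
  have hstar_u : star (u : A) = ((ua * ub⁻¹ : Aˣ) : A) := by
    rw [hu_def]
    push_cast
    rw [star_mul, ← Units.coe_star, ← Units.coe_star, star_inv, hstar_ua, hstar_ub]
  -- key identity: star u * b * u = a
  have hkey : star (u : A) * b * (u : A) = a := by
    rw [hstar_u, hu_def, ← hbb]
    push_cast
    simp only [mul_assoc, Units.inv_mul_cancel_left, Units.mul_inv_cancel_left]
    exact haa
  refine ⟨(u : A), h' * (u : A) - Ring.inverse (star (u : A)) * h, u.isUnit, ?_, ?_⟩
  · have hinv_star : Ring.inverse (star (u : A)) = (((ua * ub⁻¹ : Aˣ)⁻¹ : Aˣ) : A) := by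
      rw [hstar_u, Ring.inverse_unit]
    have hcancel : star (u : A) * Ring.inverse (star (u : A)) = 1 := by
      rw [hinv_star, hstar_u, Units.mul_inv]
    have hexp : star (u : A) * (h' * (u : A) - Ring.inverse (star (u : A)) * h)
        = star (u : A) * h' * (u : A) - h := by
      rw [mul_sub, ← mul_assoc, ← mul_assoc, hcancel, one_mul]
    rw [hexp]
    have him : h - star h = (2 * Complex.I) • a := by
      rw [ha_def]; unfold imPart
      rw [smul_inv_smul₀ (by simp [Complex.I_ne_zero])]
    have him' : h' - star h' = (2 * Complex.I) • b := by
      rw [hb_def]; unfold imPart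
      rw [smul_inv_smul₀ (by simp [Complex.I_ne_zero])]
    have hd : star (u : A) * h' * (u : A) - star (u : A) * star h' * (u : A) = h - star h := by
      rw [← sub_mul, ← mul_sub, him', him, mul_smul_comm, smul_mul_assoc, hkey]
    have hstar_eq : star (star (u : A) * h' * (u : A) - h)
        = star (u : A) * star h' * (u : A) - star h := by
      simp only [star_sub, star_mul, star_star, mul_assoc]
    rw [IsSelfAdjoint, hstar_eq, sub_eq_sub_iff_add_eq_add]
    have hd' : star (u : A) * h' * (u : A) + star h
        = h + star (u : A) * star h' * (u : A) :=
      sub_eq_sub_iff_add_eq_add.mp hd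
    rw [add_comm, hd']
  · rw [sub_add_cancel, Ring.inverse_unit, mul_assoc, Units.mul_inv, mul_one]
end

section
/- Let A be a unital C*-algebra and z ∈ A with ‖z‖ < 1. Then the map Γ⁻¹(z) = i(1-z)(1+z)⁻¹ is well-defined and Im(Γ⁻¹(z)) is positive and invertible. Conversely, if h ∈ A has Im(h) positive invertible, then 1 - ih is invertible, Γ(h) = (1+ih)(1-ih)⁻¹ satisfies ‖Γ(h)‖ < 1, and Γ and Γ⁻¹ are mutually inverse bijections between the half-space H and the open unit ball D. -/
section Helpers

variable {A : Type*} [CStarAlgebra A]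

private lemma myRing.inverse_eq {M₀ : Type*} [MonoidWithZero M₀] {a b : M₀}
    (h1 : a * b = 1) (h2 : b * a = 1) : Ring.inverse a = b := by
  have hu : IsUnit a := ⟨⟨a, b, h1, h2⟩, rfl⟩
  calc Ring.inverse a = Ring.inverse a * (a * b) := by rw [h1, mul_one]
    _ = b := by rw [← mul_assoc, Ring.inverse_mul_cancel _ hu, one_mul]

private lemma isUnit_of_both {v : A} (h1 : IsUnit (star v * v)) (h2 : IsUnit (v * star v)) :
    IsUnit v := by
  set l := Ring.inverse (star v * v) * star v with hl
  set r := star v * Ring.inverse (v * star v) with hr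
  have hlv : l * v = 1 := by
    rw [hl, mul_assoc, Ring.inverse_mul_cancel _ h1]
  have hvr : v * r = 1 := by
    rw [hr, ← mul_assoc, Ring.mul_inverse_cancel _ h2]
  have hle : l = r := by
    calc l = l * (v * r) := by rw [hvr, mul_one]
      _ = (l * v) * r := by rw [← mul_assoc]
      _ = r := by rw [hlv, one_mul]
  exact ⟨⟨v, r, hvr, hle ▸ hlv⟩, rfl⟩

private lemma star_I_smul (h : A) : star (Complex.I • h) = -(Complex.I • star h) := by
  rw [star_smul, Complex.star_def, Complex.conj_I, neg_smul]

private lemma expand1 (h : A) : star (1 - Complex.I • h) * (1 - Complex.I • h)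
    = 1 + star h * h + Complex.I • (star h - h) := by
  rw [star_sub, star_one, star_I_smul, sub_neg_eq_add]
  rw [add_mul, one_mul, mul_sub, mul_one, smul_mul_smul_comm,
    Complex.I_mul_I, neg_one_smul, smul_sub]
  abel

private lemma expand2 (h : A) : (1 - Complex.I • h) * star (1 - Complex.I • h)
    = 1 + h * star h + Complex.I • (star h - h) := by
  rw [star_sub, star_one, star_I_smul, sub_neg_eq_add]
  rw [mul_add, mul_one, sub_mul, one_mul, smul_mul_smul_comm,
    Complex.I_mul_I, neg_one_smul, smul_sub]
  abel

private lemma expand3 (h : A) : star (1 + Complex.I • h) * (1 + Complex.I • h)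
    = 1 + star h * h - Complex.I • (star h - h) := by
  rw [star_add, star_one, star_I_smul, ← sub_eq_add_neg]
  rw [sub_mul, one_mul, mul_add, mul_one, smul_mul_smul_comm,
    Complex.I_mul_I, neg_one_smul, smul_sub]
  abel

variable [PartialOrder A] [StarOrderedRing A]

private lemma exists_algebraMap_le [Nontrivial A] {c : A} (hc : 0 ≤ c) (hu : IsUnit c) :
    ∃ r > 0, algebraMap ℝ A r ≤ c := by
  rw [CFC.exists_pos_algebraMap_le_iff (IsSelfAdjoint.of_nonneg hc)]
  intro x hx
  have hx0 : 0 ≤ x := (StarOrderedRing.nonneg_iff_spectrum_nonneg (R := ℝ) c).mp hc x hx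
  rcases hx0.lt_or_eq with h | h
  · exact h
  · exact absurd hu (by rw [← h] at hx; exact (spectrum.zero_mem_iff ℝ).mp hx)

private lemma my_algebraMap_mono {r s : ℝ} (h : r ≤ s) :
    (algebraMap ℝ A) r ≤ algebraMap ℝ A s := by
  rw [← sub_nonneg, ← map_sub]
  have h1 : algebraMap ℝ A (s - r) = star (algebraMap ℝ A (Real.sqrt (s - r))) *
      algebraMap ℝ A (Real.sqrt (s - r)) := by
    rw [IsSelfAdjoint.star_eq (by exact IsSelfAdjoint.algebraMap A (isSelfAdjoint_iff.mpr rfl)),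
      ← map_mul, Real.mul_self_sqrt (by linarith)]
  rw [h1]
  exact star_mul_self_nonneg _

end Helpers

/-- The Cayley map `Γ(h) = (1+ih)(1-ih)⁻¹`. -/
noncomputable def cayley {A : Type*} [CStarAlgebra A] (h : A) : A :=
  (1 + Complex.I • h) * Ring.inverse (1 - Complex.I • h)

/-- The inverse Cayley map `Γ⁻¹(z) = i(1-z)(1+z)⁻¹`. -/
noncomputable def cayleyInv {A : Type*} [CStarAlgebra A] (z : A) : A :=
  Complex.I • ((1 - z) * Ring.inverse (1 + z))

section Main

variable {A : Type*} [CStarAlgebra A]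

private lemma I_smul_sub (h : A) : Complex.I • (star h - h) = imPart h + imPart h := by
  have h2 : h - star h = (2 * Complex.I) • imPart h := by
    rw [imPart, smul_smul, mul_inv_cancel₀ (mul_ne_zero two_ne_zero Complex.I_ne_zero), one_smul]
  rw [← neg_sub h (star h), h2, smul_neg, smul_smul,
    show Complex.I * (2 * Complex.I) = -2 by linear_combination 2 * Complex.I_mul_I,
    neg_smul, neg_neg, two_smul]

private lemma isUnit_one_add (z : A) (hz : ‖z‖ < 1) : IsUnit (1 + z) := by
  have := (Units.oneSub (-z) (by simpa using hz)).isUnit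
  rwa [Units.val_oneSub, sub_neg_eq_add] at this

private lemma cayley_cayleyInv (z : A) (hz : ‖z‖ < 1) : cayley (cayleyInv z) = z := by
  have hu : IsUnit (1 + z) := isUnit_one_add z hz
  set q := Ring.inverse (1 + z) with hqdef
  have hq1 : (1 + z) * q = 1 := Ring.mul_inverse_cancel _ hu
  have hq2 : q * (1 + z) = 1 := Ring.inverse_mul_cancel _ hu
  have hIw : Complex.I • cayleyInv z = -((1 - z) * q) := by
    rw [cayleyInv, ← hqdef, smul_smul, Complex.I_mul_I, neg_one_smul]
  have h1 : 1 - Complex.I • cayleyInv z = (1 + 1) * q := by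
    rw [hIw, sub_neg_eq_add]
    calc 1 + (1 - z) * q = (1 + z) * q + (1 - z) * q := by rw [hq1]
      _ = ((1 + z) + (1 - z)) * q := (add_mul _ _ _).symm
      _ = (1 + 1) * q := by noncomm_ring
  have h2 : 1 + Complex.I • cayleyInv z = (z + z) * q := by
    rw [hIw, ← sub_eq_add_neg]
    calc 1 - (1 - z) * q = (1 + z) * q - (1 - z) * q := by rw [hq1]
      _ = ((1 + z) - (1 - z)) * q := (sub_mul _ _ _).symm
      _ = (z + z) * q := by noncomm_ring
  have hinv : Ring.inverse (1 - Complex.I • cayleyInv z) = (2 : ℂ)⁻¹ • (1 + z) := by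
    rw [h1]
    apply myRing.inverse_eq
    · rw [mul_smul_comm, mul_assoc, hq2, mul_one, ← two_smul ℂ (1 : A), smul_smul,
        inv_mul_cancel₀ two_ne_zero, one_smul]
    · rw [smul_mul_assoc, ← mul_assoc, show (1 + z) * (1 + 1) = (1 + 1) * (1 + z) by
        noncomm_ring, mul_assoc, hq1, mul_one, ← two_smul ℂ (1 : A), smul_smul,
        inv_mul_cancel₀ two_ne_zero, one_smul]
  rw [cayley, hinv, h2, mul_smul_comm, mul_assoc, hq2, mul_one, ← two_smul ℂ z, smul_smul,
    inv_mul_cancel₀ two_ne_zero, one_smul]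

private lemma imPart_cayleyInv (z : A) (hz : ‖z‖ < 1) :
    imPart (cayleyInv z)
      = star (Ring.inverse (1 + z)) * (1 - star z * z) * Ring.inverse (1 + z) := by
  have hu : IsUnit (1 + z) := isUnit_one_add z hz
  set q := Ring.inverse (1 + z) with hqdef
  have hq1 : (1 + z) * q = 1 := Ring.mul_inverse_cancel _ hu
  have hsq : star q * (1 + star z) = 1 := by
    rw [show (1 : A) + star z = star (1 + z) by rw [star_add, star_one], ← star_mul, hq1,
      star_one]
  have hstar : star (cayleyInv z) = -(Complex.I • (star q * (1 - star z))) := by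
    rw [cayleyInv, ← hqdef, star_I_smul, star_mul, star_sub, star_one]
  rw [imPart, hstar, sub_neg_eq_add, cayleyInv, ← hqdef, ← smul_add, smul_smul,
    show (2 * Complex.I)⁻¹ * Complex.I = (2 : ℂ)⁻¹ by
      rw [mul_inv, mul_assoc, inv_mul_cancel₀ Complex.I_ne_zero, mul_one]]
  have key : (1 - z) * q + star q * (1 - star z)
      = star q * ((1 - star z * z) + (1 - star z * z)) * q := by
    calc (1 - z) * q + star q * (1 - star z)
        = (star q * (1 + star z)) * ((1 - z) * q)
            + star q * ((1 - star z) * ((1 + z) * q)) := by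
          rw [hsq, one_mul, hq1, mul_one]
      _ = star q * ((1 + star z) * (1 - z)) * q
            + star q * ((1 - star z) * (1 + z)) * q := by
          simp only [mul_assoc]
      _ = star q * ((1 - star z * z) + (1 - star z * z)) * q := by noncomm_ring
  rw [key, show star q * ((1 - star z * z) + (1 - star z * z)) * q
      = star q * (1 - star z * z) * q + star q * (1 - star z * z) * q by rw [mul_add, add_mul],
    ← two_smul ℂ (star q * (1 - star z * z) * q), smul_smul, inv_mul_cancel₀ two_ne_zero,
    one_smul]

variable [PartialOrder A] [StarOrderedRing A]

private lemma one_sub_star_mul_self_nonneg (z : A) (hz : ‖z‖ < 1) : 0 ≤ 1 - star z * z := by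
  rw [sub_nonneg]
  calc star z * z ≤ algebraMap ℝ A ‖star z * z‖ :=
        IsSelfAdjoint.le_algebraMap_norm_self (IsSelfAdjoint.star_mul_self z)
    _ ≤ algebraMap ℝ A 1 := my_algebraMap_mono (by
        rw [CStarRing.norm_star_mul_self]
        nlinarith [norm_nonneg z])
    _ = 1 := map_one _

private lemma isUnit_one_sub_smul (h : A) (hb : 0 ≤ imPart h) :
    IsUnit (1 - Complex.I • h) := by
  have e1 : star (1 - Complex.I • h) * (1 - Complex.I • h)
      = 1 + (star h * h + (imPart h + imPart h)) := by
    rw [expand1, I_smul_sub, add_assoc]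
  have e2 : (1 - Complex.I • h) * star (1 - Complex.I • h)
      = 1 + (h * star h + (imPart h + imPart h)) := by
    rw [expand2, I_smul_sub, add_assoc]
  have hu1 : IsUnit (star (1 - Complex.I • h) * (1 - Complex.I • h)) := by
    refine CStarAlgebra.isUnit_of_le (1 : A) ?_ isStrictlyPositive_one
    rw [e1]
    exact le_add_of_nonneg_right (add_nonneg (star_mul_self_nonneg h) (add_nonneg hb hb))
  have hu2 : IsUnit ((1 - Complex.I • h) * star (1 - Complex.I • h)) := by
    refine CStarAlgebra.isUnit_of_le (1 : A) ?_ isStrictlyPositive_one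
    rw [e2]
    exact le_add_of_nonneg_right (add_nonneg (mul_star_self_nonneg h) (add_nonneg hb hb))
  exact isUnit_of_both hu1 hu2

private lemma norm_cayley_lt_one (h : A) (hb : 0 ≤ imPart h) (hub : IsUnit (imPart h)) :
    ‖cayley h‖ < 1 := by
  rcases subsingleton_or_nontrivial A with hS | hN
  · simp [Subsingleton.elim (cayley h) 0]
  have hv : IsUnit (1 - Complex.I • h) := isUnit_one_sub_smul h hb
  set b := imPart h with hbdef
  set v := 1 - Complex.I • h with hvdef
  set u := 1 + Complex.I • h with hudef
  set q := Ring.inverse v with hqdef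
  have hq1 : v * q = 1 := Ring.mul_inverse_cancel _ hv
  have hq2 : q * v = 1 := Ring.inverse_mul_cancel _ hv
  have hqu : IsUnit q := ⟨⟨q, v, hq2, hq1⟩, rfl⟩
  set c := star q * b * q with hcdef
  have hc0 : 0 ≤ c := star_left_conjugate_nonneg hb q
  have hcu : IsUnit c := (hqu.star.mul hub).mul hqu
  have e1 : star v * v = 1 + star h * h + (b + b) := by
    rw [hvdef, expand1, I_smul_sub, hbdef]
  have e3 : star u * u = 1 + star h * h - (b + b) := by
    rw [hudef, expand3, I_smul_sub, hbdef]
  have e4 : star u * u + ((b + b) + (b + b)) = star v * v := by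
    rw [e1, e3]; abel
  have hz : cayley h = u * q := by rw [cayley, ← hudef, ← hvdef, ← hqdef]
  have e5 : star (cayley h) * cayley h + ((c + c) + (c + c)) = 1 := by
    rw [hz, star_mul]
    have lhs : star q * star u * (u * q) + ((c + c) + (c + c))
        = star q * (star u * u + ((b + b) + (b + b))) * q := by
      simp only [hcdef, mul_add, add_mul, mul_assoc]
    rw [lhs, e4, show star q * (star v * v) * q = (star q * star v) * (v * q) by
      simp only [mul_assoc], ← star_mul, hq1, star_one, one_mul]
  obtain ⟨r, hr, hrc⟩ := exists_algebraMap_le hc0 hcu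
  set r' := min r 8⁻¹ with hr'def
  have hr'pos : 0 < r' := lt_min hr (by norm_num)
  have hr'le : algebraMap ℝ A r' ≤ c := (my_algebraMap_mono (min_le_left _ _)).trans hrc
  have hle : star (cayley h) * cayley h ≤ algebraMap ℝ A (1 - (r' + r' + (r' + r'))) := by
    have : algebraMap ℝ A (r' + r' + (r' + r')) ≤ (c + c) + (c + c) := by
      simp only [map_add]
      exact add_le_add (add_le_add hr'le hr'le) (add_le_add hr'le hr'le)
    calc star (cayley h) * cayley h
        = 1 - ((c + c) + (c + c)) := by rw [← e5]; abel
      _ ≤ 1 - algebraMap ℝ A (r' + r' + (r' + r')) := by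
          exact sub_le_sub_left this 1
      _ = algebraMap ℝ A (1 - (r' + r' + (r' + r'))) := by
          rw [map_sub, map_one]
  have hnorm : ‖star (cayley h) * cayley h‖ ≤ 1 - (r' + r' + (r' + r')) := by
    refine (CStarAlgebra.norm_le_iff_le_algebraMap _ ?_ (star_mul_self_nonneg _)).mpr hle
    have : r' ≤ 8⁻¹ := min_le_right _ _
    linarith
  rw [CStarRing.norm_star_mul_self] at hnorm
  nlinarith [norm_nonneg (cayley h)]

private lemma cayleyInv_cayley (h : A) (hb : 0 ≤ imPart h) :
    cayleyInv (cayley h) = h := by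
  have hv : IsUnit (1 - Complex.I • h) := isUnit_one_sub_smul h hb
  set v := 1 - Complex.I • h with hvdef
  set u := 1 + Complex.I • h with hudef
  set q := Ring.inverse v with hqdef
  have hq1 : v * q = 1 := Ring.mul_inverse_cancel _ hv
  have hq2 : q * v = 1 := Ring.inverse_mul_cancel _ hv
  have hz : cayley h = u * q := by rw [cayley, ← hudef, ← hvdef, ← hqdef]
  have h1z : 1 + cayley h = (1 + 1) * q := by
    rw [hz]
    calc 1 + u * q = v * q + u * q := by rw [hq1]
      _ = (v + u) * q := (add_mul _ _ _).symm
      _ = (1 + 1) * q := by rw [hvdef, hudef]; noncomm_ring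
  have h2z : 1 - cayley h = (-(Complex.I • h + Complex.I • h)) * q := by
    rw [hz]
    calc 1 - u * q = v * q - u * q := by rw [hq1]
      _ = (v - u) * q := (sub_mul _ _ _).symm
      _ = (-(Complex.I • h + Complex.I • h)) * q := by rw [hvdef, hudef]; noncomm_ring
  have hinv : Ring.inverse (1 + cayley h) = (2 : ℂ)⁻¹ • v := by
    rw [h1z]
    apply myRing.inverse_eq
    · rw [mul_smul_comm, mul_assoc, hq2, mul_one, ← two_smul ℂ (1 : A), smul_smul,
        inv_mul_cancel₀ two_ne_zero, one_smul]
    · rw [smul_mul_assoc, ← mul_assoc, show v * (1 + 1) = (1 + 1) * v by noncomm_ring,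
        mul_assoc, hq1, mul_one, ← two_smul ℂ (1 : A), smul_smul,
        inv_mul_cancel₀ two_ne_zero, one_smul]
  rw [cayleyInv, hinv, h2z, mul_smul_comm, mul_assoc, hq2, mul_one,
    ← two_smul ℂ (Complex.I • h), ← smul_neg, smul_smul, smul_neg, ← smul_neg, smul_smul]
  rw [show Complex.I * 2⁻¹ * 2 = Complex.I from by ring, smul_neg, smul_smul,
    Complex.I_mul_I, neg_one_smul, neg_neg]

end Main

/-- `Γ(h) = (1+ih)(1-ih)⁻¹` and `Γ⁻¹(z) = i(1-z)(1+z)⁻¹` are mutually inverse bijections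
between the Poincaré half-space `H = { h : Im(h) positive invertible }` and the open unit
ball `D = { z : ‖z‖ < 1 }`. -/
theorem cayley_bijection_halfspace_ball {A : Type*} [CStarAlgebra A] [PartialOrder A]
    [StarOrderedRing A] :
    (∀ z : A, ‖z‖ < 1 →
      IsUnit (1 + z) ∧ 0 ≤ imPart (cayleyInv z) ∧ IsUnit (imPart (cayleyInv z))) ∧
    (∀ h : A, 0 ≤ imPart h → IsUnit (imPart h) →
      IsUnit (1 - Complex.I • h) ∧ ‖cayley h‖ < 1) ∧
    (∀ z : A, ‖z‖ < 1 → cayley (cayleyInv z) = z) ∧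
    (∀ h : A, 0 ≤ imPart h → IsUnit (imPart h) → cayleyInv (cayley h) = h) := by
  refine ⟨fun z hz => ?_, fun h hb hub => ⟨isUnit_one_sub_smul h hb, norm_cayley_lt_one h hb hub⟩,
    fun z hz => cayley_cayleyInv z hz, fun h hb _ => cayleyInv_cayley h hb⟩
  have hu : IsUnit (1 + z) := isUnit_one_add z hz
  have hq1 : (1 + z) * Ring.inverse (1 + z) = 1 := Ring.mul_inverse_cancel _ hu
  have hq2 : Ring.inverse (1 + z) * (1 + z) = 1 := Ring.inverse_mul_cancel _ hu
  have hqu : IsUnit (Ring.inverse (1 + z)) := ⟨⟨Ring.inverse (1 + z), 1 + z, hq2, hq1⟩, rfl⟩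
  have hy0 : 0 ≤ 1 - star z * z := one_sub_star_mul_self_nonneg z hz
  have hyu : IsUnit (1 - star z * z) := by
    have hnorm : ‖star z * z‖ < 1 := by
      rw [CStarRing.norm_star_mul_self]; nlinarith [norm_nonneg z]
    exact (Units.oneSub (star z * z) hnorm).isUnit
  refine ⟨hu, ?_, ?_⟩
  · rw [imPart_cayleyInv z hz]
    exact star_left_conjugate_nonneg hy0 _
  · rw [imPart_cayleyInv z hz]
    exact (hqu.star.mul hyu).mul hqu
end

section
/- Let A be a unital C*-algebra and x₁, x₂ ∈ A with x₁ invertible and x₁*x₁ - x₂*x₂ = 1. Let ρ_D = [[1,0],[0,-1]] and p = [[x₁x₁*, -x₁x₂*],[x₂x₁*, -x₂x₂*]] ∈ M₂(A). Then p² = p, and the element (2p - 1)ρ_D is positive and invertible in M₂(A). -/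
set_option maxHeartbeats 1000000

private lemma sphere_aux {A : Type*} [CStarAlgebra A]
    (x₁ x₂ y n m : A) (hsp : star x₁ * x₁ - star x₂ * x₂ = 1)
    (hy1 : x₁ * y = 1) (hy2 : y * x₁ = 1)
    (hn2 : n * n = 1 + x₂ * star x₂) (hsn : star n = n)
    (hm1 : n * m = 1) (hm2 : m * n = 1) (hsm : star m = m)
    (key1 : star x₂ * (m * m) = (y * star y) * star x₂) :
    (2 * !![x₁ * star x₁, -(x₁ * star x₂); x₂ * star x₁, -(x₂ * star x₂)] - 1) * !![(1:A), 0; 0, -1]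
      = star !![star x₁, star x₂; m * (x₂ * star x₁), n] *
        !![star x₁, star x₂; m * (x₂ * star x₁), n] := by
  have hs2 : star x₂ * x₂ = star x₁ * x₁ - 1 := by rw [← hsp]; abel
  have hsy : star y * star x₁ = 1 := by rw [← star_mul, hy1, star_one]
  have hyy : (y * star y) * (star x₁ * x₁) = 1 := by
    calc (y * star y) * (star x₁ * x₁) = y * (star y * star x₁) * x₁ := by noncomm_ring
      _ = 1 := by rw [hsy, mul_one, hy2]
  have hyy2 : x₁ * ((y * star y) * star x₁) = 1 := by
    calc x₁ * ((y * star y) * star x₁) = (x₁ * y) * (star y * star x₁) := by noncomm_ring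
      _ = 1 := by rw [hy1, hsy, one_mul]
  have core : x₁ * star x₂ * m * (m * (x₂ * star x₁)) = x₁ * star x₁ - 1 := by
    calc x₁ * star x₂ * m * (m * (x₂ * star x₁))
        = x₁ * ((star x₂ * (m * m)) * x₂) * star x₁ := by noncomm_ring
      _ = x₁ * (((y * star y) * star x₂) * x₂) * star x₁ := by rw [key1]
      _ = x₁ * ((y * star y) * (star x₁ * x₁ - 1)) * star x₁ := by
          rw [mul_assoc (y * star y), hs2]
      _ = x₁ * ((y * star y) * (star x₁ * x₁)) * star x₁
            - x₁ * ((y * star y) * star x₁) := by noncomm_ring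
      _ = x₁ * star x₁ - 1 := by rw [hyy, hyy2, mul_one]
  rw [two_mul]
  ext i j
  fin_cases i <;> fin_cases j <;>
    simp [Matrix.mul_apply, Fin.sum_univ_two, Matrix.star_apply]
  · rw [hsm, core]; abel
  · rw [hsm, mul_assoc, hm2, mul_one]
  · rw [hsn, ← mul_assoc, hm1, one_mul]
  · rw [hsn, hn2]; abel

/-- For `(x₁,x₂)` in the sphere of `θ_D` (`x₁* x₁ - x₂* x₂ = 1`, `x₁` invertible), the matrix
`p = [[x₁x₁*, -x₁x₂*],[x₂x₁*, -x₂x₂*]]` is idempotent and `(2p-1)ρ_D` is positive invertible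
in `M₂(A)`. -/
theorem projection_and_positive_of_sphere {A : Type*} [CStarAlgebra A]
    (x₁ x₂ : A) (hx₁ : IsUnit x₁) (hsp : star x₁ * x₁ - star x₂ * x₂ = 1)
    (ρD p : Matrix (Fin 2) (Fin 2) A) (hρD : ρD = !![1, 0; 0, -1])
    (hp : p = !![x₁ * star x₁, -(x₁ * star x₂); x₂ * star x₁, -(x₂ * star x₂)]) :
    p * p = p ∧
    (∃ s : Matrix (Fin 2) (Fin 2) A, (2 * p - 1) * ρD = star s * s) ∧
    IsUnit ((2 * p - 1) * ρD) := by
  -- idempotency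
  have key : ∀ a b : A, a * star x₁ * (x₁ * b) + -(a * star x₂ * (x₂ * b)) = a * b := by
    intro a b
    calc a * star x₁ * (x₁ * b) + -(a * star x₂ * (x₂ * b))
        = a * (star x₁ * x₁ - star x₂ * x₂) * b := by noncomm_ring
      _ = a * b := by rw [hsp, mul_one]
  have hpp : p * p = p := by
    subst hp
    rw [Matrix.mul_fin_two]
    ext i j
    fin_cases i <;> fin_cases j <;>
      simp [Matrix.mul_apply, Fin.sum_univ_two]
    · exact key x₁ (star x₁)
    · have h := key x₁ (star x₂)
      calc -(x₁ * star x₁ * (x₁ * star x₂)) + x₁ * star x₂ * (x₂ * star x₂)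
          = -(x₁ * star x₁ * (x₁ * star x₂) + -(x₁ * star x₂ * (x₂ * star x₂))) := by abel
        _ = -(x₁ * star x₂) := by rw [h]
    · exact key x₂ (star x₁)
    · have h := key x₂ (star x₂)
      calc -(x₂ * star x₁ * (x₁ * star x₂)) + x₂ * star x₂ * (x₂ * star x₂)
          = -(x₂ * star x₁ * (x₁ * star x₂) + -(x₂ * star x₂ * (x₂ * star x₂))) := by abel
        _ = -(x₂ * star x₂) := by rw [h]
  refine ⟨hpp, ?_, ?_⟩
  · -- positivity: exhibit `s`
    letI := CStarAlgebra.spectralOrder A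
    haveI := CStarAlgebra.spectralOrderedRing A
    have ha : (0 : A) ≤ x₂ * star x₂ := mul_star_self_nonneg x₂
    have ha1 : (0 : A) ≤ 1 + x₂ * star x₂ := add_nonneg zero_le_one ha
    obtain ⟨u, hu⟩ := CStarAlgebra.isUnit_of_le 1
      (le_add_of_nonneg_right ha)
    set w : A := ((u⁻¹ : Aˣ) : A) with hwdef
    have hw1 : (1 + x₂ * star x₂) * w = 1 := by rw [hwdef, ← hu]; exact u.mul_inv
    have hw2 : w * (1 + x₂ * star x₂) = 1 := by rw [hwdef, ← hu]; exact u.inv_mul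
    set n : A := CFC.sqrt (1 + x₂ * star x₂) with hndef
    have hn2 : n * n = 1 + x₂ * star x₂ := CFC.sqrt_mul_sqrt_self _ ha1
    have hn0 : (0 : A) ≤ n := CFC.sqrt_nonneg _
    have hsn : star n = n := (IsSelfAdjoint.of_nonneg hn0).star_eq
    have hcomm : n * (1 + x₂ * star x₂) = (1 + x₂ * star x₂) * n := by
      rw [← hn2, ← mul_assoc, mul_assoc]
    have hwn : w * n = n * w := by
      calc w * n = w * n * ((1 + x₂ * star x₂) * w) := by rw [hw1, mul_one]
        _ = w * (n * (1 + x₂ * star x₂)) * w := by noncomm_ring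
        _ = w * ((1 + x₂ * star x₂) * n) * w := by rw [hcomm]
        _ = (w * (1 + x₂ * star x₂)) * (n * w) := by noncomm_ring
        _ = n * w := by rw [hw2, one_mul]
    have hm1 : n * (n * w) = 1 := by rw [← mul_assoc, hn2, hw1]
    have hm2 : (n * w) * n = 1 := by rw [mul_assoc, hwn, ← mul_assoc, hn2, hw1]
    have hmm : (n * w) * (n * w) = w := by
      rw [← mul_assoc, hm2, one_mul]
    have hsw : star w = w := by
      have hsw1 : star w * (1 + x₂ * star x₂) = 1 := by
        have h := congrArg star hw1
        rw [star_mul, star_add, star_one, star_mul, star_star] at h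
        exact h
      calc star w = star w * ((1 + x₂ * star x₂) * w) := by rw [hw1, mul_one]
        _ = (star w * (1 + x₂ * star x₂)) * w := (mul_assoc _ _ _).symm
        _ = w := by rw [hsw1, one_mul]
    have hsm : star (n * w) = n * w := by rw [star_mul, hsw, hsn, hwn]
    obtain ⟨v, hv⟩ := hx₁
    set y : A := ((v⁻¹ : Aˣ) : A) with hydef
    have hy1 : x₁ * y = 1 := by rw [hydef, ← hv]; exact v.mul_inv
    have hy2 : y * x₁ = 1 := by rw [hydef, ← hv]; exact v.inv_mul
    have h1 : star x₁ * x₁ = 1 + star x₂ * x₂ := sub_eq_iff_eq_add.mp hsp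
    have hsy : star y * star x₁ = 1 := by rw [← star_mul, hy1, star_one]
    have hyy : (y * star y) * (star x₁ * x₁) = 1 := by
      calc (y * star y) * (star x₁ * x₁) = y * (star y * star x₁) * x₁ := by noncomm_ring
        _ = 1 := by rw [hsy, mul_one, hy2]
    have e : (star x₁ * x₁) * star x₂ = star x₂ * (1 + x₂ * star x₂) := by
      rw [h1]; noncomm_ring
    have key1 : star x₂ * ((n * w) * (n * w)) = (y * star y) * star x₂ := by
      rw [hmm]
      calc star x₂ * w = ((y * star y) * (star x₁ * x₁)) * (star x₂ * w) := by
            rw [hyy, one_mul]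
        _ = (y * star y) * ((star x₁ * x₁) * star x₂ * w) := by noncomm_ring
        _ = (y * star y) * (star x₂ * (1 + x₂ * star x₂) * w) := by rw [e]
        _ = (y * star y) * (star x₂ * ((1 + x₂ * star x₂) * w)) := by noncomm_ring
        _ = (y * star y) * star x₂ := by rw [hw1, mul_one]
    refine ⟨!![star x₁, star x₂; (n * w) * (x₂ * star x₁), n], ?_⟩
    rw [hp, hρD]
    exact sphere_aux x₁ x₂ y n (n * w) hsp hy1 hy2 hn2 hsn hm1 hm2 hsm key1
  · -- invertibility
    have hρ2 : ρD * ρD = 1 := by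
      rw [hρD, Matrix.mul_fin_two, Matrix.one_fin_two]
      norm_num
    have hu2 : (2 * p - 1) * (2 * p - 1) = 1 := by
      calc (2 * p - 1) * (2 * p - 1) = 4 * (p * p) - 4 * p + 1 := by noncomm_ring
        _ = 1 := by rw [hpp]; noncomm_ring
    refine ⟨⟨(2 * p - 1) * ρD, ρD * (2 * p - 1), ?_, ?_⟩, rfl⟩
    · calc (2 * p - 1) * ρD * (ρD * (2 * p - 1))
          = (2 * p - 1) * (ρD * ρD) * (2 * p - 1) := by noncomm_ring
        _ = 1 := by rw [hρ2, mul_one, hu2]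
    · calc ρD * (2 * p - 1) * ((2 * p - 1) * ρD)
          = ρD * ((2 * p - 1) * (2 * p - 1)) * ρD := by noncomm_ring
        _ = 1 := by rw [hu2, mul_one, hρ2]
end

section
/- Let A be a unital C*-algebra and γ ∈ A. Then the selfadjoint matrix [[(1+γγ*)^{1/2}, γ],[γ*, (1+γ*γ)^{1/2}]] ∈ M₂(A) is positive. (Proof: it equals (1+m²)^{1/2} + m for the selfadjoint m = [[0,γ],[γ*,0]], and (1+t²)^{1/2} + t ≥ 0 for all real t.) -/
set_option maxHeartbeats 1000000

open Polynomial in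
lemma intertwine {A : Type*} [CStarAlgebra A] (b : A) {s : Set ℝ} [CompactSpace s]
    (h₁ : spectrum ℝ (star b * b) ⊆ s) (h₂ : spectrum ℝ (b * star b) ⊆ s)
    (g : ℝ → ℝ) (hg : ContinuousOn g s) :
    b * cfc g (star b * b) = cfc g (b * star b) * b := by
  have ha : IsSelfAdjoint (star b * b) := IsSelfAdjoint.star_mul_self b
  have ha' : IsSelfAdjoint (b * star b) := IsSelfAdjoint.mul_star_self b
  let ι₁ : C((spectrum ℝ (star b * b) : Set ℝ), s) :=
    ⟨Set.inclusion h₁, continuous_inclusion h₁⟩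
  let ι₂ : C((spectrum ℝ (b * star b) : Set ℝ), s) :=
    ⟨Set.inclusion h₂, continuous_inclusion h₂⟩
  let Φ : C(s, ℝ) →⋆ₐ[ℝ] A := (cfcHom ha).comp (ContinuousMap.compStarAlgHom' ℝ ℝ ι₁)
  let Ψ : C(s, ℝ) →⋆ₐ[ℝ] A := (cfcHom ha').comp (ContinuousMap.compStarAlgHom' ℝ ℝ ι₂)
  have hΦ : Continuous Φ := (cfcHom_continuous ha).comp (ContinuousMap.continuous_precomp ι₁)
  have hΨ : Continuous Ψ := (cfcHom_continuous ha').comp (ContinuousMap.continuous_precomp ι₂)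
  -- the closed set of functions satisfying the intertwining relation
  set V : Set C(s, ℝ) := {f | b * Φ f = Ψ f * b} with hV
  have hVclosed : IsClosed V :=
    isClosed_eq ((continuous_mul_left b).comp hΦ) ((continuous_mul_right b).comp hΨ)
  have hF : ∀ {B : A} (hB : IsSelfAdjoint B) (h : spectrum ℝ B ⊆ s),
      (ContinuousMap.compStarAlgHom' ℝ ℝ (⟨Set.inclusion h, continuous_inclusion h⟩ :
        C((spectrum ℝ B : Set ℝ), s))) (toContinuousMapOnAlgHom s X)
        = (ContinuousMap.id ℝ).restrict (spectrum ℝ B) := by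
    intro B hB h
    ext x
    simp [Polynomial.toContinuousMapOn]

  have hΦX : Φ (toContinuousMapOnAlgHom s X) = star b * b := by
    rw [show Φ = (cfcHom ha).comp (ContinuousMap.compStarAlgHom' ℝ ℝ ι₁) from rfl,
      StarAlgHom.comp_apply, hF ha h₁]
    exact cfcHom_id (R := ℝ) ha
  have hΨX : Ψ (toContinuousMapOnAlgHom s X) = b * star b := by
    rw [show Ψ = (cfcHom ha').comp (ContinuousMap.compStarAlgHom' ℝ ℝ ι₂) from rfl,
      StarAlgHom.comp_apply, hF ha' h₂]
    exact cfcHom_id (R := ℝ) ha'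
  have hpow : ∀ n : ℕ, b * (star b * b) ^ n = (b * star b) ^ n * b := by
    intro n
    induction n with
    | zero => simp
    | succ n ih =>
      rw [pow_succ, pow_succ, ← mul_assoc, ih, mul_assoc, mul_assoc, mul_assoc]
  have haeval : ∀ p : ℝ[X], b * aeval (star b * b) p = aeval (b * star b) p * b := by
    intro p
    induction p using Polynomial.induction_on' with
    | add p q hp hq => simp only [map_add, mul_add, add_mul, hp, hq]
    | monomial n c =>
      simp only [Polynomial.aeval_monomial]
      rw [← mul_assoc, ← Algebra.commutes c b, mul_assoc, hpow, ← mul_assoc]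
  have e1 : ∀ p : ℝ[X], Φ (toContinuousMapOnAlgHom s p) = aeval (star b * b) p := by
    intro p
    induction p using Polynomial.induction_on' with
    | add p q hp hq => simp only [map_add, hp, hq]
    | monomial n c =>
      rw [← Polynomial.C_mul_X_pow_eq_monomial, Polynomial.C_eq_algebraMap]
      simp only [map_mul, map_pow, AlgHomClass.commutes, hΦX, Polynomial.aeval_X]
  have e2 : ∀ p : ℝ[X], Ψ (toContinuousMapOnAlgHom s p) = aeval (b * star b) p := by
    intro p
    induction p using Polynomial.induction_on' with
    | add p q hp hq => simp only [map_add, hp, hq]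
    | monomial n c =>
      rw [← Polynomial.C_mul_X_pow_eq_monomial, Polynomial.C_eq_algebraMap]
      simp only [map_mul, map_pow, AlgHomClass.commutes, hΨX, Polynomial.aeval_X]
  have hpoly : (polynomialFunctions s : Set C(s, ℝ)) ⊆ V := by
    rw [polynomialFunctions_coe]
    rintro - ⟨p, rfl⟩
    show b * Φ _ = Ψ _ * b
    rw [e1, e2]
    exact haeval p
  have hall : ∀ f : C(s, ℝ), f ∈ V := by
    have h1 : closure (polynomialFunctions s : Set C(s, ℝ)) ⊆ V :=
      hVclosed.closure_subset_iff.mpr hpoly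
    have h2 : closure (polynomialFunctions s : Set C(s, ℝ))
        = ((polynomialFunctions s).topologicalClosure : Set C(s, ℝ)) :=
      (Subalgebra.topologicalClosure_coe _).symm
    rw [h2, polynomialFunctions.topologicalClosure s] at h1
    intro f
    exact h1 (by simp)
  have key := hall ⟨s.restrict g, hg.restrict⟩
  have hg₁ : ContinuousOn g (spectrum ℝ (star b * b)) := hg.mono h₁
  have hg₂ : ContinuousOn g (spectrum ℝ (b * star b)) := hg.mono h₂
  rw [cfc_apply g (star b * b) ha hg₁, cfc_apply g (b * star b) ha' hg₂]
  convert (show b * cfcHom ha (ContinuousMap.compStarAlgHom' ℝ ℝ ι₁ _) = cfcHom ha' (ContinuousMap.compStarAlgHom' ℝ ℝ ι₂ _) * b from key) using 3 <;> ext x <;> rfl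


/-- For any `γ ∈ A`, the selfadjoint matrix
`[[(1+γγ*)^{1/2}, γ],[γ*, (1+γ*γ)^{1/2}]] ∈ M₂(A)` is positive. -/
theorem matrix_sqrt_corner_positive {A : Type*} [CStarAlgebra A] [PartialOrder A]
    [StarOrderedRing A] (γ : A) :
    ∃ s : Matrix (Fin 2) (Fin 2) A,
      !![CFC.sqrt (1 + γ * star γ), γ; star γ, CFC.sqrt (1 + star γ * γ)] = star s * s := by
  obtain hT | hT := subsingleton_or_nontrivial A
  · exact ⟨0, Subsingleton.elim _ _⟩
  set a : A := star γ * γ with ha_def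
  set a' : A := γ * star γ with ha'_def
  have ha0 : (0 : A) ≤ a := star_mul_self_nonneg γ
  have ha'0 : (0 : A) ≤ a' := mul_star_self_nonneg γ
  set M : ℝ := max ‖a‖ ‖a'‖ with hM
  set S : Set ℝ := Set.Icc 0 M with hS
  have hspec : ∀ {c : A}, 0 ≤ c → ‖c‖ ≤ M → spectrum ℝ c ⊆ S := by
    intro c hc hn t ht
    have h0 : 0 ≤ t := spectrum_nonneg_of_nonneg hc ht
    have h1 : ‖t‖ ≤ ‖c‖ := spectrum.norm_le_norm_of_mem ht
    rw [Real.norm_eq_abs, abs_of_nonneg h0] at h1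
    exact ⟨h0, h1.trans hn⟩
  have hsubA : spectrum ℝ a ⊆ S := hspec ha0 (le_max_left _ _)
  have hsubA' : spectrum ℝ a' ⊆ S := hspec ha'0 (le_max_right _ _)
  have hposA : spectrum ℝ a ⊆ {t : ℝ | 0 ≤ t} := fun t ht => spectrum_nonneg_of_nonneg ha0 ht
  have hposA' : spectrum ℝ a' ⊆ {t : ℝ | 0 ≤ t} := fun t ht => spectrum_nonneg_of_nonneg ha'0 ht
  -- the functions
  set f : ℝ → ℝ := fun t => Real.sqrt (1 + t) with hf_def
  set pf : ℝ → ℝ := fun t => Real.sqrt (f t) with hpf_def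
  set rf : ℝ → ℝ := fun t => (pf t)⁻¹ with hrf_def
  set wf : ℝ → ℝ := fun t => (f t)⁻¹ with hwf_def
  have hfc : Continuous f := by simp only [hf_def]; fun_prop
  have hpfc : Continuous pf := by simp only [hpf_def, hf_def]; fun_prop
  have hfpos : ∀ t : ℝ, 0 ≤ t → 0 < f t := fun t ht => Real.sqrt_pos.2 (by linarith)
  have hpfpos : ∀ t : ℝ, 0 ≤ t → 0 < pf t := fun t ht => Real.sqrt_pos.2 (hfpos t ht)
  have hrfc : ContinuousOn rf {t : ℝ | 0 ≤ t} :=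
    hpfc.continuousOn.inv₀ fun t ht => (hpfpos t ht).ne'
  have hwfc : ContinuousOn wf {t : ℝ | 0 ≤ t} :=
    hfc.continuousOn.inv₀ fun t ht => (hfpos t ht).ne'
  -- the elements
  have hrfA' : ContinuousOn rf (spectrum ℝ a') := hrfc.mono hposA'
  have hrfA : ContinuousOn rf (spectrum ℝ a) := hrfc.mono hposA
  have hwfA' : ContinuousOn wf (spectrum ℝ a') := hwfc.mono hposA'
  have hwfA : ContinuousOn wf (spectrum ℝ a) := hwfc.mono hposA
  have haSA : IsSelfAdjoint a := IsSelfAdjoint.star_mul_self γ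
  have haSA' : IsSelfAdjoint a' := IsSelfAdjoint.mul_star_self γ
  set P : A := cfc pf a' with hP_def
  set Q : A := cfc rf a' with hQ_def
  set D : A := cfc rf a with hD_def
  have hPsa : IsSelfAdjoint P := cfc_predicate pf a'
  have hQsa : IsSelfAdjoint Q := cfc_predicate rf a'
  have hDsa : IsSelfAdjoint D := cfc_predicate rf a
  -- P * P = cfc f a'
  have hPP : P * P = cfc f a' := by
    rw [hP_def, ← cfc_mul pf pf a' hpfc.continuousOn hpfc.continuousOn]
    exact cfc_congr fun t _ => Real.mul_self_sqrt (Real.sqrt_nonneg _)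
  -- P * Q = 1
  have hPQ : P * Q = 1 := by
    rw [hP_def, hQ_def, ← cfc_mul pf rf a' hpfc.continuousOn hrfA']
    have : cfc (fun t => pf t * rf t) a' = cfc (1 : ℝ → ℝ) a' :=
      cfc_congr fun t ht => mul_inv_cancel₀ (hpfpos t (hposA' ht)).ne'
    rw [this, cfc_one ℝ a']
  have hQP : Q * P = 1 := by
    rw [hP_def, hQ_def, ← cfc_mul rf pf a' hrfA' hpfc.continuousOn]
    have : cfc (fun t => rf t * pf t) a' = cfc (1 : ℝ → ℝ) a' :=
      cfc_congr fun t ht => inv_mul_cancel₀ (hpfpos t (hposA' ht)).ne'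
    rw [this, cfc_one ℝ a']
  -- Q * Q = cfc wf a'
  have hrr : ∀ t : ℝ, rf t * rf t = wf t := by
    intro t
    rw [hrf_def, hwf_def]
    simp only
    rw [← mul_inv, Real.mul_self_sqrt (Real.sqrt_nonneg _)]
  have hQQ : Q * Q = cfc wf a' := by
    rw [hQ_def, ← cfc_mul rf rf a' hrfA' hrfA']
    exact cfc_congr fun t _ => hrr t
  have hDD : D * D = cfc wf a := by
    rw [hD_def, ← cfc_mul rf rf a hrfA hrfA]
    exact cfc_congr fun t _ => hrr t
  -- identification of the square roots
  have hsqrt : ∀ (c : A), 0 ≤ c → spectrum ℝ c ⊆ {t : ℝ | 0 ≤ t} →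
      CFC.sqrt (1 + c) = cfc f c := by
    intro c hc hcs
    refine CFC.sqrt_unique ?_ (cfc_nonneg fun t _ => Real.sqrt_nonneg _)
    rw [← cfc_mul f f c hfc.continuousOn hfc.continuousOn]
    have h1 : cfc (fun t => f t * f t) c = cfc (fun t : ℝ => 1 + t) c :=
      cfc_congr fun t ht => Real.mul_self_sqrt (by
        have h0 : (0:ℝ) ≤ t := hcs ht
        linarith)
    rw [h1, cfc_const_add 1 (fun t : ℝ => t) c continuousOn_id hc.isSelfAdjoint,
      cfc_id' ℝ c hc.isSelfAdjoint]
    simp [Algebra.algebraMap_eq_smul_one]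
  have hx : CFC.sqrt (1 + a') = cfc f a' := hsqrt a' ha'0 hposA'
  have hy : CFC.sqrt (1 + a) = cfc f a := hsqrt a ha0 hposA
  -- intertwining
  have hwS : ContinuousOn wf S := hwfc.mono (fun t ht => ht.1)
  have hstar1 : spectrum ℝ (star (star γ) * star γ) ⊆ S := by rwa [star_star]
  have hstar2 : spectrum ℝ (star γ * star (star γ)) ⊆ S := by rwa [star_star]
  have hint := intertwine (star γ) hstar1 hstar2 wf hwS
  rw [star_star] at hint
  -- hint : star γ * cfc wf a' = cfc wf a * star γ
  -- the off-diagonal / bottom-right computation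
  have hkey : star γ * cfc wf a' * γ + cfc wf a = cfc f a := by
    have h2 : cfc wf a * a = cfc (fun t : ℝ => wf t * t) a := by
      have h := cfc_mul wf (fun x : ℝ => x) a hwfA (by fun_prop)
      rw [cfc_id' ℝ a haSA] at h
      exact h.symm
    have h3 := cfc_add a (fun t : ℝ => wf t * t) wf (hwfA.mul (by fun_prop)) hwfA
    rw [hint, mul_assoc, ← ha_def, h2, ← h3]
    refine cfc_congr fun t ht => ?_
    have h0 : (0:ℝ) ≤ t := hposA ht
    have hf0 : 0 < f t := hfpos t h0
    have : wf t * t + wf t = (f t)⁻¹ * (t + 1) := by rw [hwf_def]; ring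
    rw [this, show (t + 1 : ℝ) = f t * f t from by
      rw [hf_def]; simp only; rw [Real.mul_self_sqrt (by linarith)]; ring]
    rw [← mul_assoc, inv_mul_cancel₀ hf0.ne', one_mul]
  -- assemble the matrix
  refine ⟨!![P, Q * γ; 0, D], ?_⟩
  ext i j
  fin_cases i <;> fin_cases j <;>
    simp [Matrix.mul_apply, Fin.sum_univ_two, Matrix.star_apply]
  · -- (0,0)
    rw [hPsa.star_eq, hPP, hx]
  · -- (0,1)
    rw [hPsa.star_eq, ← mul_assoc, hPQ, one_mul]
  · -- (1,0)
    rw [hQsa.star_eq, mul_assoc, hQP, mul_one]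
  · -- (1,1)
    rw [hQsa.star_eq, hDsa.star_eq, hDD, hy, ← hkey, ← hQQ]
    noncomm_ring
end

section
/- Let A be a unital C*-algebra and z ∈ A with ‖z‖ < 1. Let Ω = [[0, z*],[z, 0]] ∈ M₂(A). Then ‖Ω‖ = ‖z‖ < 1, (1-Ω²)⁻¹(1+Ω)² is positive invertible, and ‖log((1-Ω²)⁻¹(1+Ω)²)‖ = ‖log(1+Ω) - log(1-Ω)‖ = log((1+‖z‖)/(1-‖z‖)). -/
set_option maxHeartbeats 1000000


private lemma isUnit_my_diag {A : Type*} [Ring A] {p q : A} :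
    IsUnit (!![p, 0; 0, q] : Matrix (Fin 2) (Fin 2) A) ↔ IsUnit p ∧ IsUnit q := by
  constructor
  · rintro ⟨u, hu⟩
    have h1 : (!![p, 0; 0, q] : Matrix (Fin 2) (Fin 2) A) * (u⁻¹).val = 1 := by
      rw [← hu]; exact u.mul_inv
    have h2 : (u⁻¹).val * (!![p, 0; 0, q] : Matrix (Fin 2) (Fin 2) A) = 1 := by
      rw [← hu]; exact u.inv_mul
    set N : Matrix (Fin 2) (Fin 2) A := (u⁻¹).val with hN
    constructor
    · refine isUnit_iff_exists.mpr ⟨N 0 0, ?_, ?_⟩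
      · have := congrFun (congrFun h1 0) 0
        simpa [Matrix.mul_apply, Fin.sum_univ_two] using this
      · have := congrFun (congrFun h2 0) 0
        simpa [Matrix.mul_apply, Fin.sum_univ_two] using this
    · refine isUnit_iff_exists.mpr ⟨N 1 1, ?_, ?_⟩
      · have := congrFun (congrFun h1 1) 1
        simpa [Matrix.mul_apply, Fin.sum_univ_two] using this
      · have := congrFun (congrFun h2 1) 1
        simpa [Matrix.mul_apply, Fin.sum_univ_two] using this
  · rintro ⟨⟨up, hp⟩, ⟨uq, hq⟩⟩
    refine isUnit_iff_exists.mpr ⟨!![(↑up⁻¹ : A), 0; 0, (↑uq⁻¹ : A)], ?_, ?_⟩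
    · rw [← hp, ← hq, Matrix.mul_fin_two]
      simp [up.mul_inv, uq.mul_inv, ← Matrix.one_fin_two]
    · rw [← hp, ← hq, Matrix.mul_fin_two]
      simp [up.inv_mul, uq.inv_mul, ← Matrix.one_fin_two]

private lemma spectrum_my_diag {A : Type*} [CStarAlgebra A] (a c : A) :
    spectrum ℝ (!![a, 0; 0, c] : Matrix (Fin 2) (Fin 2) A) = spectrum ℝ a ∪ spectrum ℝ c := by
  ext r
  have key : algebraMap ℝ (Matrix (Fin 2) (Fin 2) A) r - !![a, 0; 0, c] =
      !![algebraMap ℝ A r - a, 0; 0, algebraMap ℝ A r - c] := by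
    rw [Matrix.algebraMap_eq_diagonal]
    ext i j
    fin_cases i <;> fin_cases j <;> simp [Matrix.diagonal]
  simp only [spectrum.mem_iff, Set.mem_union, key, isUnit_my_diag]
  tauto

/-- Let `z ∈ A` with `‖z‖ < 1` and let `Ω = [[0,z*],[z,0]] ∈ M₂(A)`. Realizing `M₂(A)` as a
C*-algebra `B` via a ⋆-algebra isomorphism `φ` (the C*-norm being unique), one has
`‖Ω‖ = ‖z‖ < 1`, the element `(1-Ω²)⁻¹(1+Ω)²` is positive invertible, and
`‖log((1-Ω²)⁻¹(1+Ω)²)‖ = ‖log(1+Ω) - log(1-Ω)‖ = log((1+‖z‖)/(1-‖z‖))`. -/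
theorem log_norm_of_omega {A B : Type*} [CStarAlgebra A] [CStarAlgebra B] [PartialOrder B]
    [StarOrderedRing B] (φ : Matrix (Fin 2) (Fin 2) A ≃⋆ₐ[ℂ] B)
    (z : A) (hz : ‖z‖ < 1)
    (Ω : Matrix (Fin 2) (Fin 2) A) (hΩ : Ω = !![0, star z; z, 0]) :
    ‖φ Ω‖ = ‖z‖ ∧
    IsUnit (1 - φ Ω * φ Ω) ∧
    0 ≤ Ring.inverse (1 - φ Ω * φ Ω) * ((1 + φ Ω) * (1 + φ Ω)) ∧
    IsUnit (Ring.inverse (1 - φ Ω * φ Ω) * ((1 + φ Ω) * (1 + φ Ω))) ∧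
    ‖cfc Real.log (Ring.inverse (1 - φ Ω * φ Ω) * ((1 + φ Ω) * (1 + φ Ω)))‖ =
      ‖cfc Real.log (1 + φ Ω) - cfc Real.log (1 - φ Ω)‖ ∧
    ‖cfc Real.log (1 + φ Ω) - cfc Real.log (1 - φ Ω)‖ =
      Real.log ((1 + ‖z‖) / (1 - ‖z‖)) := by
  obtain hB | hB := subsingleton_or_nontrivial B
  · -- degenerate case
    have hM : Subsingleton (Matrix (Fin 2) (Fin 2) A) := φ.toEquiv.subsingleton
    have hA : Subsingleton A := by
      constructor
      intro a b
      have := Subsingleton.elim (Matrix.of fun _ _ => a : Matrix (Fin 2) (Fin 2) A)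
        (Matrix.of fun _ _ => b)
      exact congrFun (congrFun this 0) 0
    have hz0 : ‖z‖ = 0 := by rw [Subsingleton.elim z 0, norm_zero]
    refine ⟨?_, ?_, ?_, ?_, ?_, ?_⟩
    · rw [Subsingleton.elim (φ Ω) 0, norm_zero, hz0]
    · exact isUnit_of_subsingleton _
    · exact le_of_eq (Subsingleton.elim _ _)
    · exact isUnit_of_subsingleton _
    · rw [Subsingleton.elim (cfc Real.log (Ring.inverse (1 - φ Ω * φ Ω) * ((1 + φ Ω) * (1 + φ Ω))))
        (cfc Real.log (1 + φ Ω) - cfc Real.log (1 - φ Ω))]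
    · rw [Subsingleton.elim (cfc Real.log (1 + φ Ω) - cfc Real.log (1 - φ Ω)) (0 : B), norm_zero,
        hz0]
      norm_num
  · -- main case
    have hA : Nontrivial A := by
      by_contra h
      rw [not_nontrivial_iff_subsingleton] at h
      exact not_subsingleton B φ.symm.toEquiv.subsingleton
    set b := φ Ω with hb_def
    -- Ω is selfadjoint
    have hΩsa : star Ω = Ω := by
      rw [hΩ]
      ext i j
      fin_cases i <;> fin_cases j <;>
        simp [Matrix.star_eq_conjTranspose, Matrix.conjTranspose_apply]
    have hb : IsSelfAdjoint b := by
      rw [IsSelfAdjoint, hb_def, ← map_star, hΩsa]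
    -- Ω * Ω is the diagonal matrix
    have hΩ2 : Ω * Ω = !![star z * z, 0; 0, z * star z] := by
      rw [hΩ, Matrix.mul_fin_two]
      norm_num
    -- spectra transfer along φ
    have hspec : ∀ x : Matrix (Fin 2) (Fin 2) A, spectrum ℝ (φ x) = spectrum ℝ x := by
      intro x
      have hcomm : ∀ r : ℝ, φ (algebraMap ℝ (Matrix (Fin 2) (Fin 2) A) r) = algebraMap ℝ B r := by
        intro r
        calc φ (algebraMap ℝ (Matrix (Fin 2) (Fin 2) A) r)
            = φ ((algebraMap ℝ ℂ r) • 1) := by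
              rw [← Algebra.algebraMap_eq_smul_one, ← IsScalarTower.algebraMap_apply]
          _ = (algebraMap ℝ ℂ r) • φ 1 := map_smul φ _ _
          _ = algebraMap ℝ B r := by
              rw [map_one, ← Algebra.algebraMap_eq_smul_one, ← IsScalarTower.algebraMap_apply]
      exact AlgEquiv.spectrum_eq (AlgEquiv.ofRingEquiv (f := φ.toRingEquiv) hcomm) x
    -- spectrum of b * b
    have hbb : b * b = φ (Ω * Ω) := by rw [map_mul]
    have hspecbb : spectrum ℝ (b * b) = spectrum ℝ (star z * z) ∪ spectrum ℝ (z * star z) := by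
      rw [hbb, hspec, hΩ2, spectrum_my_diag]
    -- norm of b
    have hzz : ‖star z * z‖ = ‖z‖ * ‖z‖ := CStarRing.norm_star_mul_self
    have hzz' : ‖z * star z‖ = ‖z‖ * ‖z‖ := CStarRing.norm_self_mul_star
    have hbbnonneg : (0 : B) ≤ b * b := by
      nth_rewrite 1 [← hb.star_eq]
      exact star_mul_self_nonneg b
    have hnormbb : ‖b * b‖ = ‖z‖ * ‖z‖ := by
      apply le_antisymm
      · have hmem : ‖b * b‖ ∈ spectrum ℝ (b * b) :=
          CStarAlgebra.norm_mem_spectrum_of_nonneg hbbnonneg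
        rw [hspecbb] at hmem
        rcases hmem with h | h
        · simpa [hzz] using Real.le_norm_self _ |>.trans (spectrum.norm_le_norm_of_mem h)
        · simpa [hzz'] using Real.le_norm_self _ |>.trans (spectrum.norm_le_norm_of_mem h)
      · have hsa : IsSelfAdjoint (star z * z) := IsSelfAdjoint.star_mul_self z
        rcases CStarAlgebra.norm_or_neg_norm_mem_spectrum hsa with h | h
        · have h' : ‖star z * z‖ ∈ spectrum ℝ (b * b) := by
            rw [hspecbb]; exact Or.inl h
          have := spectrum.norm_le_norm_of_mem h'
          rwa [Real.norm_eq_abs, abs_of_nonneg (norm_nonneg _), hzz] at this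
        · have h' : -‖star z * z‖ ∈ spectrum ℝ (b * b) := by
            rw [hspecbb]; exact Or.inl h
          have := spectrum.norm_le_norm_of_mem h'
          rwa [Real.norm_eq_abs, abs_neg, abs_of_nonneg (norm_nonneg _), hzz] at this
    have hbz : ‖b‖ = ‖z‖ := by
      have h1 : ‖b‖ * ‖b‖ = ‖z‖ * ‖z‖ := by
        rw [← CStarRing.norm_star_mul_self (x := b), hb.star_eq, hnormbb]
      nlinarith [norm_nonneg b, norm_nonneg z, sq_nonneg (‖b‖ - ‖z‖), sq_nonneg (‖b‖ + ‖z‖)]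
    -- basic facts about the spectrum of b
    have hr0 : (0 : ℝ) ≤ ‖z‖ := norm_nonneg z
    have hσ : ∀ x ∈ spectrum ℝ b, |x| ≤ ‖z‖ := by
      intro x hx
      simpa [Real.norm_eq_abs, hbz] using spectrum.norm_le_norm_of_mem hx
    have hposp : ∀ x ∈ spectrum ℝ b, 0 < 1 + x := by
      intro x hx
      have := hσ x hx
      have := abs_le.mp this
      linarith
    have hposm : ∀ x ∈ spectrum ℝ b, 0 < 1 - x := by
      intro x hx
      have := abs_le.mp (hσ x hx)
      linarith
    set g : ℝ → ℝ := fun x => (1 + x) / (1 - x) with hg_def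
    have hgpos : ∀ x ∈ spectrum ℝ b, 0 < g x := fun x hx =>
      div_pos (hposp x hx) (hposm x hx)
    have hc_g : ContinuousOn g (spectrum ℝ b) := by
      apply ContinuousOn.div (by fun_prop) (by fun_prop)
      exact fun x hx => ne_of_gt (hposm x hx)
    have hc_lp : ContinuousOn (fun x : ℝ => Real.log (1 + x)) (spectrum ℝ b) := by
      apply Real.continuousOn_log.comp (by fun_prop)
      intro x hx
      exact ne_of_gt (hposp x hx)
    have hc_lm : ContinuousOn (fun x : ℝ => Real.log (1 - x)) (spectrum ℝ b) := by
      apply Real.continuousOn_log.comp (by fun_prop)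
      intro x hx
      exact ne_of_gt (hposm x hx)
    -- cfc representations
    have e_plus : cfc (fun x : ℝ => 1 + x) b = 1 + b := by
      have h := cfc_add (a := b) (fun _ : ℝ => (1 : ℝ)) (fun x : ℝ => x)
        (by fun_prop) (by fun_prop)
      simpa [cfc_const_one ℝ b, cfc_id' ℝ b] using h
    have e_minus : cfc (fun x : ℝ => 1 - x) b = 1 - b := by
      have h := cfc_sub (fun _ : ℝ => (1 : ℝ)) (fun x : ℝ => x) b (by fun_prop) (by fun_prop)
      simpa [cfc_const_one ℝ b, cfc_id' ℝ b] using h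
    have e_sq : cfc (fun x : ℝ => 1 - x * x) b = 1 - b * b := by
      have h2 := cfc_mul (fun x : ℝ => x) (fun x : ℝ => x) b (by fun_prop) (by fun_prop)
      have h := cfc_sub (fun _ : ℝ => (1 : ℝ)) (fun x : ℝ => x * x) b (by fun_prop) (by fun_prop)
      rw [h2, cfc_id' ℝ b] at h
      simpa [cfc_const_one ℝ b] using h
    -- invertibility of 1 - b * b
    have hu : IsUnit (1 - b * b) := by
      refine (Units.oneSub (b * b) ?_).isUnit
      rw [hnormbb]
      nlinarith
    set c : B := cfc g b with hc_def
    have hA1 : (1 - b * b) * c = (1 + b) * (1 + b) := by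
      have step1 : cfc (fun x : ℝ => (1 - x * x) * g x) b = (1 - b * b) * c := by
        rw [cfc_mul _ _ b (by fun_prop) hc_g, e_sq]
      have step2 : cfc (fun x : ℝ => (1 - x * x) * g x) b
          = cfc (fun x : ℝ => (1 + x) * (1 + x)) b := by
        apply cfc_congr
        intro x hx
        have h1 : (1 : ℝ) - x ≠ 0 := ne_of_gt (hposm x hx)
        simp only [hg_def]
        field_simp [hg_def]
        ring
      have step3 : cfc (fun x : ℝ => (1 + x) * (1 + x)) b = (1 + b) * (1 + b) := by
        rw [cfc_mul _ _ b (by fun_prop) (by fun_prop), e_plus]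
      rw [← step1, step2, step3]
    have hinv : Ring.inverse (1 - b * b) * ((1 + b) * (1 + b)) = c := by
      rw [← hA1, ← mul_assoc, Ring.inverse_mul_cancel _ hu, one_mul]
    have hcnonneg : (0 : B) ≤ c := cfc_nonneg fun x hx => (hgpos x hx).le
    have hcunit : IsUnit c := by
      rw [hc_def, isUnit_cfc_iff g b hc_g hb]
      exact fun x hx => ne_of_gt (hgpos x hx)
    -- logarithm identities
    have hc_log_img : ContinuousOn Real.log (g '' spectrum ℝ b) := by
      apply Real.continuousOn_log.mono
      rintro y ⟨x, hx, rfl⟩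
      exact ne_of_gt (hgpos x hx)
    have hlog_c : cfc Real.log c = cfc (fun x : ℝ => Real.log (g x)) b :=
      (cfc_comp' Real.log g b hc_log_img hc_g).symm
    have hlog_p : cfc Real.log (1 + b) = cfc (fun x : ℝ => Real.log (1 + x)) b := by
      have hg : ContinuousOn Real.log ((fun x : ℝ => 1 + x) '' spectrum ℝ b) := by
        apply Real.continuousOn_log.mono
        rintro y ⟨x, hx, rfl⟩
        exact ne_of_gt (hposp x hx)
      have h := cfc_comp' Real.log (fun x : ℝ => 1 + x) b hg (by fun_prop)
      rw [e_plus] at h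
      exact h.symm
    have hlog_m : cfc Real.log (1 - b) = cfc (fun x : ℝ => Real.log (1 - x)) b := by
      have hg : ContinuousOn Real.log ((fun x : ℝ => 1 - x) '' spectrum ℝ b) := by
        apply Real.continuousOn_log.mono
        rintro y ⟨x, hx, rfl⟩
        exact ne_of_gt (hposm x hx)
      have h := cfc_comp' Real.log (fun x : ℝ => 1 - x) b hg (by fun_prop)
      rw [e_minus] at h
      exact h.symm
    have hdiff : cfc (fun x : ℝ => Real.log (1 + x)) b - cfc (fun x : ℝ => Real.log (1 - x)) b
        = cfc (fun x : ℝ => Real.log (1 + x) - Real.log (1 - x)) b :=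
      (cfc_sub (fun x : ℝ => Real.log (1 + x)) (fun x : ℝ => Real.log (1 - x)) b hc_lp hc_lm).symm
    have hfun_eq : cfc (fun x : ℝ => Real.log (g x)) b
        = cfc (fun x : ℝ => Real.log (1 + x) - Real.log (1 - x)) b := by
      apply cfc_congr
      intro x hx
      exact Real.log_div (ne_of_gt (hposp x hx)) (ne_of_gt (hposm x hx))
    -- the target value
    set L : ℝ := Real.log (1 + ‖z‖) - Real.log (1 - ‖z‖) with hL_def
    have hL_eq : Real.log ((1 + ‖z‖) / (1 - ‖z‖)) = L :=
      Real.log_div (by linarith) (by linarith)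
    have hL0 : 0 ≤ L := by
      have := Real.log_le_log (by linarith : (0:ℝ) < 1 - ‖z‖) (by linarith : 1 - ‖z‖ ≤ 1 + ‖z‖)
      linarith
    -- the norm computation
    have hbound : ∀ x ∈ spectrum ℝ b, ‖Real.log (1 + x) - Real.log (1 - x)‖ ≤ L := by
      intro x hx
      obtain ⟨hx1, hx2⟩ := abs_le.mp (hσ x hx)
      have hp := hposp x hx
      have hm := hposm x hx
      rw [Real.norm_eq_abs]
      rcases le_or_gt 0 x with h0 | h0
      · have e1 : Real.log (1 - x) ≤ Real.log (1 + x) :=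
          Real.log_le_log hm (by linarith)
        have e2 : Real.log (1 + x) ≤ Real.log (1 + ‖z‖) :=
          Real.log_le_log hp (by linarith)
        have e3 : Real.log (1 - ‖z‖) ≤ Real.log (1 - x) :=
          Real.log_le_log (by linarith) (by linarith)
        rw [abs_of_nonneg (by linarith)]
        linarith
      · have e1 : Real.log (1 + x) ≤ Real.log (1 - x) :=
          Real.log_le_log hp (by linarith)
        have e2 : Real.log (1 - x) ≤ Real.log (1 + ‖z‖) :=
          Real.log_le_log hm (by linarith)
        have e3 : Real.log (1 - ‖z‖) ≤ Real.log (1 + x) :=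
          Real.log_le_log (by linarith) (by linarith)
        rw [abs_of_nonpos (by linarith)]
        linarith
    have hc_h : ContinuousOn (fun x : ℝ => Real.log (1 + x) - Real.log (1 - x))
        (spectrum ℝ b) := hc_lp.sub hc_lm
    have hnorm_main : ‖cfc (fun x : ℝ => Real.log (1 + x) - Real.log (1 - x)) b‖ = L := by
      apply le_antisymm
      · exact norm_cfc_le hL0 hbound
      · rcases CStarAlgebra.norm_or_neg_norm_mem_spectrum hb with hmem | hmem
        · rw [hbz] at hmem
          have := norm_apply_le_norm_cfc (fun x : ℝ => Real.log (1 + x) - Real.log (1 - x))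
            b hmem hc_h hb
          rwa [Real.norm_eq_abs, abs_of_nonneg (by rw [hL_def] at *; exact hL0)] at this
        · rw [hbz] at hmem
          have := norm_apply_le_norm_cfc (fun x : ℝ => Real.log (1 + x) - Real.log (1 - x))
            b hmem hc_h hb
          have heq : Real.log (1 + -‖z‖) - Real.log (1 - -‖z‖) = -L := by
            have e1 : 1 + -‖z‖ = 1 - ‖z‖ := by ring
            have e2 : 1 - -‖z‖ = 1 + ‖z‖ := by ring
            rw [e1, e2, hL_def]
            ring
          replace this : |Real.log (1 + -‖z‖) - Real.log (1 - -‖z‖)|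
              ≤ ‖cfc (fun x : ℝ => Real.log (1 + x) - Real.log (1 - x)) b‖ := by
            rw [Real.norm_eq_abs] at this
            exact this
          rw [heq, abs_neg, abs_of_nonneg hL0] at this
          exact this
    refine ⟨hbz, hu, ?_, ?_, ?_, ?_⟩
    · rw [hinv]; exact hcnonneg
    · rw [hinv]; exact hcunit
    · rw [hinv, hlog_c, hfun_eq, hlog_p, hlog_m, hdiff]
    · rw [hlog_p, hlog_m, hdiff, hnorm_main, hL_eq]
end
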